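/- arXiv:1211.5676 — 6 statements merged into one kernel-verified Lean document; each statement's English description precedes it below -/
import Mathlib

section
/- (Proposition 3.1, estimate (3.12b), zero mean momentum.) For all real α, β ≥ 0 there exist constants C > 0 and σ₀ ∈ (0,1) such that for all σ ∈ (0,σ₀): ( ∫_{ℝ²}∫_{ℝ²} [ (ln(2+|p|))^α / (1+|ln|p||)^β ]² · |φ_in(p₁,p₂)|² dp₁ dp₂ )^{1/2} ≤ C·(ln(1/σ))^{−β}. -/
open MeasureTheory

noncomputable abbrev R2 : Type := EuclideanSpace ℝ (Fin 2)

lemma gauss_integrable {b : ℝ} (hb : 0 < b) :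
    Integrable (fun v : R2 => Real.exp (-b * ‖v‖ ^ 2)) := by
  have h := (GaussianFourier.integrable_cexp_neg_mul_sq_norm_add (V := R2)
    (b := (b : ℂ)) (by simpa using hb) 0 0).re
  refine h.congr (Filter.Eventually.of_forall fun v => ?_)
  have e : -(b : ℂ) * ‖v‖ ^ 2 + 0 * (inner ℝ (0 : R2) v : ℝ) = ((-b * ‖v‖ ^ 2 : ℝ) : ℂ) := by
    push_cast; ring
  simp only [RCLike.re_to_complex]
  rw [e, Complex.exp_ofReal_re]

lemma gauss_integral {b : ℝ} (hb : 0 < b) :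
    ∫ v : R2, Real.exp (-b * ‖v‖ ^ 2) = Real.pi / b := by
  rw [GaussianFourier.integral_rexp_neg_mul_sq_norm hb]
  have : (Module.finrank ℝ R2 : ℝ) / 2 = 1 := by
    simp [finrank_euclideanSpace_fin]
  rw [this, Real.rpow_one]

set_option maxHeartbeats 1000000 in
/-- Proposition 3.1, estimate (3.12b): weighted `L²` bound for the Gaussian incoming
state with zero mean momentum, with `p := μ₂ p₁ - μ₁ p₂` the relative momentum. -/
theorem weighted_bound_zero_momentum (μ₁ : ℝ) (hμ : μ₁ ∈ Set.Icc (0:ℝ) 1)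
    (α β : ℝ) (hα : 0 ≤ α) (hβ : 0 ≤ β) :
    ∃ C > (0:ℝ), ∃ σ₀ ∈ Set.Ioo (0:ℝ) 1, ∀ σ ∈ Set.Ioo (0:ℝ) σ₀,
      Real.sqrt (∫ x : R2 × R2,
          (Real.log (2 + ‖(1 - μ₁) • x.1 - μ₁ • x.2‖) ^ α /
              (1 + |Real.log ‖(1 - μ₁) • x.1 - μ₁ • x.2‖|) ^ β) ^ 2 *
            ((σ ^ 2 * Real.pi)⁻¹ *
              Real.exp (-‖x.1‖ ^ 2 / (2 * σ ^ 2)) * Real.exp (-‖x.2‖ ^ 2 / (2 * σ ^ 2))) ^ 2)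
        ≤ C * Real.log (1 / σ) ^ (-β) := by
  obtain ⟨hμ0, hμ1⟩ := hμ
  set K : ℝ := ((2:ℝ) ^ (α + β)) ^ 2 + Real.exp (8 * α ^ 2) with hKdef
  have hKpos : 0 < K := by positivity
  refine ⟨2 * Real.sqrt K, mul_pos two_pos (Real.sqrt_pos.mpr hKpos),
    min (1/2) (1 / (4 * (16 * β + 1) ^ 2)), ⟨lt_min (by norm_num) (by positivity),
      lt_of_le_of_lt (min_le_left _ _) (by norm_num)⟩, ?_⟩
  intro σ hσ
  obtain ⟨hσ0, hσ1⟩ := hσ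
  have hσhalf : σ < 1/2 := lt_of_lt_of_le hσ1 (min_le_left _ _)
  have hσβ : σ < 1 / (4 * (16 * β + 1) ^ 2) := lt_of_lt_of_le hσ1 (min_le_right _ _)
  have hσlt1 : σ < 1 := by linarith
  set L := Real.log (1 / σ) with hLdef
  have hL : 0 < L := Real.log_pos (by rw [lt_div_iff₀ hσ0]; linarith)
  have hLσ : Real.log σ = -L := by rw [hLdef, one_div, Real.log_inv, neg_neg]
  set T := L ^ (-β) with hTdef
  have hTpos : 0 < T := Real.rpow_pos_of_pos hL _
  -- √σ is small
  have hsq0 : (0:ℝ) < Real.sqrt σ := Real.sqrt_pos.mpr hσ0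
  have hsqrt : Real.sqrt σ ≤ 1 / (2 * (16 * β + 1)) := by
    have e : ((1:ℝ) / (2 * (16 * β + 1))) ^ 2 = 1 / (4 * (16 * β + 1) ^ 2) := by
      rw [div_pow, one_pow, mul_pow]; norm_num
    have h := Real.sqrt_le_sqrt hσβ.le
    rw [← e, Real.sqrt_sq (by positivity)] at h
    exact h
  -- σ * L is small
  have hσL : σ * L ≤ 2 * Real.sqrt σ := by
    have h1 : L ≤ 2 / Real.sqrt σ := by
      have e1 : (1:ℝ) / σ = (1 / Real.sqrt σ) ^ 2 := by
        rw [div_pow, one_pow, Real.sq_sqrt hσ0.le]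
      have e2 : L = 2 * Real.log (1 / Real.sqrt σ) := by
        rw [hLdef, e1, Real.log_pow]; push_cast; ring
      have e3 : Real.log (1 / Real.sqrt σ) ≤ 1 / Real.sqrt σ - 1 :=
        Real.log_le_sub_one_of_pos (by positivity)
      have e4 : (1:ℝ) / Real.sqrt σ - 1 ≤ 1 / Real.sqrt σ := by linarith
      rw [e2]
      calc 2 * Real.log (1 / Real.sqrt σ) ≤ 2 * (1 / Real.sqrt σ) := by linarith
        _ = 2 / Real.sqrt σ := by ring
    calc σ * L ≤ σ * (2 / Real.sqrt σ) := mul_le_mul_of_nonneg_left h1 hσ0.le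
      _ = 2 * (σ / Real.sqrt σ) := by ring
      _ = 2 * Real.sqrt σ := by rw [Real.div_sqrt]
  have hσL1 : σ * L ≤ 1 / (16 * β + 1) := by
    calc σ * L ≤ 2 * Real.sqrt σ := hσL
      _ ≤ 2 * (1 / (2 * (16 * β + 1))) := by linarith
      _ = 1 / (16 * β + 1) := by field_simp
  have hσL2 : σ * L ≤ 1 := by
    refine hσL1.trans ?_
    rw [div_le_one (by linarith)]; linarith
  -- exp (-1/(8σ)) ≤ T ^ 2
  have hexpT : Real.exp (-(1 / (8 * σ))) ≤ T ^ 2 := by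
    have step1 : Real.exp (-(1 / (8 * σ))) ≤ σ ^ (2 * β) := by
      rw [Real.rpow_def_of_pos hσ0]
      refine Real.exp_le_exp.mpr ?_
      rw [hLσ]
      have h2 : 2 * β * L * (8 * σ) ≤ 1 := by
        have : 16 * β * (σ * L) ≤ 16 * β * (1 / (16 * β + 1)) :=
          mul_le_mul_of_nonneg_left hσL1 (by linarith)
        have h3 : 16 * β * (1 / (16 * β + 1)) ≤ 1 := by
          rw [mul_one_div, div_le_one (by linarith)]; linarith
        nlinarith [mul_nonneg hβ (mul_nonneg hσ0.le hL.le)]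
      have h4 : 2 * β * L ≤ 1 / (8 * σ) := by
        rw [le_div_iff₀ (by positivity)]; linarith
      nlinarith
    have step2 : σ ^ (2 * β) ≤ T ^ 2 := by
      have hTT : T ^ 2 = (L ^ (2 * β))⁻¹ := by
        rw [hTdef, sq, ← Real.rpow_add hL, ← Real.rpow_neg hL.le]
        congr 1; ring
      have hmul : σ ^ (2 * β) * L ^ (2 * β) ≤ 1 := by
        rw [← Real.mul_rpow hσ0.le hL.le]
        exact Real.rpow_le_one (by positivity) hσL2 (by positivity)
      rw [hTT, ← one_div, le_div_iff₀ (Real.rpow_pos_of_pos hL _)]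
      exact hmul
    exact step1.trans step2
  -- the dominating function
  set c0 : ℝ := K * T ^ 2 * ((σ ^ 2 * Real.pi)⁻¹) ^ 2 with hc0def
  set g : R2 × R2 → ℝ := fun x => c0 *
    (Real.exp (-‖x.1‖ ^ 2 / (2 * σ ^ 2)) * Real.exp (-‖x.2‖ ^ 2 / (2 * σ ^ 2))) with hgdef
  have hform : ∀ v : R2, Real.exp (-‖v‖ ^ 2 / (2 * σ ^ 2))
      = Real.exp (-(2 * σ ^ 2)⁻¹ * ‖v‖ ^ 2) := fun v => by congr 1; field_simp
  have hbpos : (0:ℝ) < (2 * σ ^ 2)⁻¹ := by positivity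
  have hint : Integrable fun v : R2 => Real.exp (-‖v‖ ^ 2 / (2 * σ ^ 2)) := by
    refine (gauss_integrable hbpos).congr (Filter.Eventually.of_forall fun v => ?_)
    exact (hform v).symm
  have hgint : Integrable g := by
    exact ((hint.mul_prod hint).const_mul c0)
  -- integral of g
  have hgval : ∫ x, g x = 4 * K * T ^ 2 := by
    have h1 : ∫ v : R2, Real.exp (-‖v‖ ^ 2 / (2 * σ ^ 2)) = Real.pi / (2 * σ ^ 2)⁻¹ := by
      simp_rw [hform]; exact gauss_integral hbpos
    have h2 : ∫ x : R2 × R2, g x = c0 *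
        ((∫ v : R2, Real.exp (-‖v‖ ^ 2 / (2 * σ ^ 2))) *
         (∫ v : R2, Real.exp (-‖v‖ ^ 2 / (2 * σ ^ 2)))) := by
      simp only [hgdef]
      rw [integral_const_mul]
      congr 1
      exact integral_prod_mul (fun v : R2 => Real.exp (-‖v‖ ^ 2 / (2 * σ ^ 2))) (fun v : R2 => Real.exp (-‖v‖ ^ 2 / (2 * σ ^ 2)))
    rw [h2, h1, hc0def]
    have hπ : Real.pi ≠ 0 := Real.pi_ne_zero
    have hσne : σ ≠ 0 := hσ0.ne'
    field_simp
    ring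
  -- null set of zero relative momentum
  have hN : volume {x : R2 × R2 | (1 - μ₁) • x.1 - μ₁ • x.2 = 0} = 0 := by
    rcases eq_or_ne μ₁ 0 with h0 | hne
    · have hset : {x : R2 × R2 | (1 - μ₁) • x.1 - μ₁ • x.2 = 0}
          = ({0} : Set R2) ×ˢ (Set.univ : Set R2) := by
        ext ⟨x1, x2⟩
        simp only [Set.mem_setOf_eq, Set.mem_prod, Set.mem_singleton_iff, Set.mem_univ, and_true, h0]
        constructor
        · intro h; simpa using h
        · intro h; simp [h]
      rw [hset, Measure.volume_eq_prod, Measure.prod_prod, measure_singleton, zero_mul]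
    · have hcont : Continuous fun x : R2 × R2 => (1 - μ₁) • x.1 - μ₁ • x.2 := by
        fun_prop
      have hm : MeasurableSet {x : R2 × R2 | (1 - μ₁) • x.1 - μ₁ • x.2 = 0} := by
        have := hcont.measurable (measurableSet_singleton (0 : R2))
        simpa [Set.preimage, Set.mem_singleton_iff] using this
      rw [Measure.volume_eq_prod, Measure.measure_prod_null hm]
      refine Filter.Eventually.of_forall fun x1 => ?_
      have hpre : (Prod.mk x1 ⁻¹' {x : R2 × R2 | (1 - μ₁) • x.1 - μ₁ • x.2 = 0})
          = {μ₁⁻¹ • ((1 - μ₁) • x1)} := by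
        ext y
        simp only [Set.mem_preimage, Set.mem_setOf_eq, Set.mem_singleton_iff]
        constructor
        · intro h
          have h' : μ₁ • y = (1 - μ₁) • x1 := (sub_eq_zero.mp h).symm
          rw [← inv_smul_smul₀ hne y, h']
        · intro h
          rw [h, smul_inv_smul₀ hne, sub_self]
      simp only [Pi.zero_apply, hpre]
      exact measure_singleton _
  -- scalar pointwise bound
  have scalar : ∀ t s1 s2 : ℝ, 0 < t → t ≤ s1 + s2 → 0 ≤ s1 → 0 ≤ s2 →
      (Real.log (2 + t) ^ α / (1 + |Real.log t|) ^ β) ^ 2 *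
        ((σ ^ 2 * Real.pi)⁻¹ *
          Real.exp (-s1 ^ 2 / (2 * σ ^ 2)) * Real.exp (-s2 ^ 2 / (2 * σ ^ 2))) ^ 2
      ≤ c0 * (Real.exp (-s1 ^ 2 / (2 * σ ^ 2)) * Real.exp (-s2 ^ 2 / (2 * σ ^ 2))) := by
    intro t s1 s2 ht hts hs1 hs2
    clear hgval hgint hint hform hN hgdef g
    have ht2 : t ^ 2 ≤ 2 * (s1 ^ 2 + s2 ^ 2) := by nlinarith [sq_nonneg (s1 - s2)]
    set W := Real.log (2 + t) ^ α / (1 + |Real.log t|) ^ β with hWdef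
    have hWnn : 0 ≤ W := by
      apply div_nonneg (Real.rpow_nonneg (Real.log_nonneg (by linarith)) _)
        (Real.rpow_nonneg (by positivity) _)
    set E : ℝ := Real.exp (-s1 ^ 2 / (2 * σ ^ 2)) * Real.exp (-s2 ^ 2 / (2 * σ ^ 2)) with hEdef
    have hE : E = Real.exp (-(s1 ^ 2 + s2 ^ 2) / (2 * σ ^ 2)) := by
      rw [hEdef, ← Real.exp_add]; congr 1; ring
    have hEpos : 0 < E := by rw [hE]; exact Real.exp_pos _
    -- the key scalar inequality
    have hred : W ^ 2 * E ≤ K * T ^ 2 := by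
      rcases le_or_gt (t ^ 2) σ with hcase | hcase
      · -- small t
        have ht1 : t ≤ 1 := by nlinarith
        have hNa : Real.log (2 + t) ^ α ≤ 2 ^ α := by
          refine Real.rpow_le_rpow (Real.log_nonneg (by linarith)) ?_ hα
          have := Real.log_le_sub_one_of_pos (show (0:ℝ) < 2 + t by linarith)
          linarith
        have htsq : t ≤ Real.sqrt σ := by
          rw [show σ = Real.sqrt σ ^ 2 by rw [Real.sq_sqrt hσ0.le]] at hcase
          nlinarith [Real.sqrt_nonneg σ]
        have hlogt : Real.log t ≤ -(L / 2) := by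
          calc Real.log t ≤ Real.log (Real.sqrt σ) :=
                Real.log_le_log ht htsq
            _ = Real.log σ / 2 := Real.log_sqrt hσ0.le
            _ = -(L / 2) := by rw [hLσ]; ring
        have habs : L / 2 ≤ 1 + |Real.log t| := by
          have : L / 2 ≤ -Real.log t := by linarith
          have h2 := neg_le_abs (Real.log t)
          linarith
        have hDb : (L / 2) ^ β ≤ (1 + |Real.log t|) ^ β :=
          Real.rpow_le_rpow (by positivity) habs hβ
        have hWle : W ≤ 2 ^ (α + β) * T := by
          have h1 : W ≤ 2 ^ α / (L / 2) ^ β := by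
            rw [hWdef]
            exact div_le_div₀ (by positivity) hNa (Real.rpow_pos_of_pos (by positivity) _) hDb
          have h2 : (2:ℝ) ^ α / (L / 2) ^ β = 2 ^ (α + β) * T := by
            rw [Real.div_rpow hL.le (by norm_num : (0:ℝ) ≤ 2), hTdef,
              Real.rpow_neg hL.le, Real.rpow_add (by norm_num : (0:ℝ) < 2)]
            have hLβ : (0:ℝ) < L ^ β := Real.rpow_pos_of_pos hL _
            have h2β : (0:ℝ) < (2:ℝ) ^ β := Real.rpow_pos_of_pos (by norm_num) _
            field_simp
          rw [← h2]; exact h1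
        have hE1 : E ≤ 1 := by
          rw [hE]
          refine Real.exp_le_one_iff.mpr ?_
          apply div_nonpos_of_nonpos_of_nonneg (neg_nonpos.mpr (by positivity)) (by positivity)
        calc W ^ 2 * E ≤ W ^ 2 * 1 := mul_le_mul_of_nonneg_left hE1 (sq_nonneg W)
          _ = W ^ 2 := mul_one _
          _ ≤ (2 ^ (α + β) * T) ^ 2 := pow_le_pow_left₀ hWnn hWle 2
          _ = ((2:ℝ) ^ (α + β)) ^ 2 * T ^ 2 := by ring
          _ ≤ K * T ^ 2 := by
              rw [hKdef]
              exact mul_le_mul_of_nonneg_right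
                (le_add_of_nonneg_right (Real.exp_pos (8 * α ^ 2)).le) (sq_nonneg T)
      · -- large t
        have hD1 : (1:ℝ) ≤ (1 + |Real.log t|) ^ β := by
          have := Real.rpow_le_rpow (by norm_num : (0:ℝ) ≤ 1)
            (show (1:ℝ) ≤ 1 + |Real.log t| by linarith [abs_nonneg (Real.log t)]) hβ
          rwa [Real.one_rpow] at this
        have hWle : W ≤ Real.exp (t * α) := by
          have h1 : W ≤ Real.log (2 + t) ^ α :=
            div_le_self (Real.rpow_nonneg (Real.log_nonneg (by linarith)) _) hD1
          have h2 : Real.log (2 + t) ≤ Real.exp t := by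
            have h3 := Real.log_le_sub_one_of_pos (show (0:ℝ) < 2 + t by linarith)
            have h4 := Real.add_one_le_exp t
            linarith
          have h5 : Real.log (2 + t) ^ α ≤ Real.exp t ^ α :=
            Real.rpow_le_rpow (Real.log_nonneg (by linarith)) h2 hα
          rw [← Real.exp_mul] at h5
          exact h1.trans h5
        have hA : t ^ 2 / 8 + 1 / (8 * σ) ≤ (s1 ^ 2 + s2 ^ 2) / (2 * σ ^ 2) := by
          rw [div_add_div _ _ (by norm_num : (8:ℝ) ≠ 0) (by positivity : (8:ℝ) * σ ≠ 0),
            div_le_div_iff₀ (by positivity) (by positivity)]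
          nlinarith [mul_nonneg (mul_nonneg hσ0.le hσ0.le) (sq_nonneg t),
            mul_nonneg hσ0.le (sq_nonneg t), sq_nonneg t, hσ0.le, hσlt1.le,
            mul_le_mul_of_nonneg_left ht2 (by positivity : (0:ℝ) ≤ σ)]
        have hB : 2 * (t * α) ≤ 8 * α ^ 2 + t ^ 2 / 8 := by nlinarith [sq_nonneg (t - 8 * α)]
        have hWE : W ^ 2 * E ≤ Real.exp (8 * α ^ 2) * Real.exp (-(1 / (8 * σ))) := by
          have h6 : W ^ 2 * E ≤ Real.exp (t * α) ^ 2 * E :=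
            mul_le_mul_of_nonneg_right (pow_le_pow_left₀ hWnn hWle 2) hEpos.le
          have h7 : Real.exp (t * α) ^ 2 * E
              = Real.exp (2 * (t * α) + -(s1 ^ 2 + s2 ^ 2) / (2 * σ ^ 2)) := by
            rw [hE, Real.exp_add, ← Real.exp_nat_mul]
            norm_num
          have h8 : 2 * (t * α) + -(s1 ^ 2 + s2 ^ 2) / (2 * σ ^ 2)
              ≤ 8 * α ^ 2 + -(1 / (8 * σ)) := by
            have e9 : -(s1 ^ 2 + s2 ^ 2) / (2 * σ ^ 2)
                = -((s1 ^ 2 + s2 ^ 2) / (2 * σ ^ 2)) := by ring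
            rw [e9]; linarith
          calc W ^ 2 * E ≤ Real.exp (2 * (t * α) + -(s1 ^ 2 + s2 ^ 2) / (2 * σ ^ 2)) := by
                rw [← h7]; exact h6
            _ ≤ Real.exp (8 * α ^ 2 + -(1 / (8 * σ))) := Real.exp_le_exp.mpr h8
            _ = Real.exp (8 * α ^ 2) * Real.exp (-(1 / (8 * σ))) := Real.exp_add _ _
        calc W ^ 2 * E ≤ Real.exp (8 * α ^ 2) * Real.exp (-(1 / (8 * σ))) := hWE
          _ ≤ Real.exp (8 * α ^ 2) * T ^ 2 :=
              mul_le_mul_of_nonneg_left hexpT (Real.exp_pos _).le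
          _ ≤ K * T ^ 2 := by
              rw [hKdef]
              exact mul_le_mul_of_nonneg_right
                (le_add_of_nonneg_left (sq_nonneg ((2:ℝ) ^ (α + β)))) (sq_nonneg T)
    -- conclude pointwise
    have expand : W ^ 2 * ((σ ^ 2 * Real.pi)⁻¹ * Real.exp (-s1 ^ 2 / (2 * σ ^ 2))
        * Real.exp (-s2 ^ 2 / (2 * σ ^ 2))) ^ 2
        = (W ^ 2 * E) * (((σ ^ 2 * Real.pi)⁻¹) ^ 2 * E) := by
      rw [hEdef]; ring
    have hgx : c0 * (Real.exp (-s1 ^ 2 / (2 * σ ^ 2)) * Real.exp (-s2 ^ 2 / (2 * σ ^ 2)))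
        = (K * T ^ 2) * (((σ ^ 2 * Real.pi)⁻¹) ^ 2 * E) := by
      rw [hc0def, hEdef]; ring
    rw [expand, hgx]
    exact mul_le_mul_of_nonneg_right hred (by positivity)
  -- a.e. pointwise bound
  have key : ∀ x : R2 × R2, (1 - μ₁) • x.1 - μ₁ • x.2 ≠ 0 →
      (Real.log (2 + ‖(1 - μ₁) • x.1 - μ₁ • x.2‖) ^ α /
          (1 + |Real.log ‖(1 - μ₁) • x.1 - μ₁ • x.2‖|) ^ β) ^ 2 *
        ((σ ^ 2 * Real.pi)⁻¹ *
          Real.exp (-‖x.1‖ ^ 2 / (2 * σ ^ 2)) * Real.exp (-‖x.2‖ ^ 2 / (2 * σ ^ 2))) ^ 2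
      ≤ g x := by
    intro x hx
    have hts : ‖(1 - μ₁) • x.1 - μ₁ • x.2‖ ≤ ‖x.1‖ + ‖x.2‖ := by
      calc ‖(1 - μ₁) • x.1 - μ₁ • x.2‖ ≤ ‖(1 - μ₁) • x.1‖ + ‖μ₁ • x.2‖ := norm_sub_le _ _
        _ = |1 - μ₁| * ‖x.1‖ + |μ₁| * ‖x.2‖ := by
            rw [norm_smul, norm_smul, Real.norm_eq_abs, Real.norm_eq_abs]
        _ ≤ 1 * ‖x.1‖ + 1 * ‖x.2‖ := by
            refine add_le_add (mul_le_mul_of_nonneg_right ?_ (norm_nonneg _))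
              (mul_le_mul_of_nonneg_right ?_ (norm_nonneg _))
            · rw [abs_of_nonneg (by linarith)]; linarith
            · rw [abs_of_nonneg hμ0]; linarith
        _ = ‖x.1‖ + ‖x.2‖ := by ring
    have := scalar ‖(1 - μ₁) • x.1 - μ₁ • x.2‖ ‖x.1‖ ‖x.2‖
      (norm_pos_iff.mpr hx) hts (norm_nonneg _) (norm_nonneg _)
    simpa only [hgdef] using this
  have haebound : ∀ᵐ x : R2 × R2,
      (Real.log (2 + ‖(1 - μ₁) • x.1 - μ₁ • x.2‖) ^ α /
          (1 + |Real.log ‖(1 - μ₁) • x.1 - μ₁ • x.2‖|) ^ β) ^ 2 *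
        ((σ ^ 2 * Real.pi)⁻¹ *
          Real.exp (-‖x.1‖ ^ 2 / (2 * σ ^ 2)) * Real.exp (-‖x.2‖ ^ 2 / (2 * σ ^ 2))) ^ 2
      ≤ g x := by
    have hne : ∀ᵐ x : R2 × R2, (1 - μ₁) • x.1 - μ₁ • x.2 ≠ 0 := by
      rw [ae_iff]
      convert hN using 2
      ext x; simp
    exact hne.mono key
  have hnonneg : ∀ᵐ x : R2 × R2, 0 ≤
      (Real.log (2 + ‖(1 - μ₁) • x.1 - μ₁ • x.2‖) ^ α /
          (1 + |Real.log ‖(1 - μ₁) • x.1 - μ₁ • x.2‖|) ^ β) ^ 2 *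
        ((σ ^ 2 * Real.pi)⁻¹ *
          Real.exp (-‖x.1‖ ^ 2 / (2 * σ ^ 2)) * Real.exp (-‖x.2‖ ^ 2 / (2 * σ ^ 2))) ^ 2 :=
    Filter.Eventually.of_forall fun x => by positivity
  have hmono := integral_mono_of_nonneg hnonneg hgint haebound
  have hCsq : (2 * Real.sqrt K * T) ^ 2 = 4 * K * T ^ 2 := by
    rw [mul_pow, mul_pow, Real.sq_sqrt hKpos.le]; ring
  calc Real.sqrt (∫ x : R2 × R2,
          (Real.log (2 + ‖(1 - μ₁) • x.1 - μ₁ • x.2‖) ^ α /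
              (1 + |Real.log ‖(1 - μ₁) • x.1 - μ₁ • x.2‖|) ^ β) ^ 2 *
            ((σ ^ 2 * Real.pi)⁻¹ *
              Real.exp (-‖x.1‖ ^ 2 / (2 * σ ^ 2)) * Real.exp (-‖x.2‖ ^ 2 / (2 * σ ^ 2))) ^ 2)
      ≤ Real.sqrt (∫ x, g x) := Real.sqrt_le_sqrt hmono
    _ = Real.sqrt ((2 * Real.sqrt K * T) ^ 2) := by rw [hgval, hCsq]
    _ = 2 * Real.sqrt K * T := Real.sqrt_sq (by positivity)
end

section
/- (Proposition 3.1, estimate (3.12).) For all real α, β ≥ 0 and fixed μ₁ ∈ [0,1] there exist constants C > 0 and ε ∈ (0,1) such that for all σ > 0 and p₀ ∈ ℝ² with σ + |p₀| < ε: ( ∫_{ℝ²}∫_{ℝ²} [ (ln(2+|p|))^α / (1+|ln|p||)^β ]² · |φ_{in,p₀}(p₁,p₂)|² dp₁ dp₂ )^{1/2} ≤ C·|ln(σ+|p₀|)|^{−β}. -/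
set_option maxHeartbeats 1000000

open MeasureTheory

lemma my_gauss_integral (b : ℝ) (hb : 0 < b) (c : R2) :
    ∫ v : R2, Real.exp (-b * ‖v - c‖^2) = Real.pi / b := by
  rw [integral_sub_right_eq_self (fun v : R2 => Real.exp (-b * ‖v‖^2)) c]
  rw [GaussianFourier.integral_rexp_neg_mul_sq_norm hb]
  have h2 : ((Module.finrank ℝ R2 : ℝ) / 2 : ℝ) = 1 := by
    rw [finrank_euclideanSpace_fin]; norm_num
  rw [h2, Real.rpow_one]

lemma my_gauss_integrable (b : ℝ) (hb : 0 < b) (c : R2) :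
    Integrable (fun v : R2 => Real.exp (-b * ‖v - c‖^2)) := by
  have h : Integrable (fun v : R2 => Complex.exp (-(b:ℂ) * ‖v‖^2 + 0 * ((inner ℝ (0:R2) v : ℝ) : ℂ))) :=
    GaussianFourier.integrable_cexp_neg_mul_sq_norm_add (by simpa using hb) 0 0
  have h2 : Integrable (fun v : R2 => Real.exp (-b * ‖v‖^2)) := by
    have h3 := h.re
    convert h3 using 2 with v
    simp only [zero_mul, add_zero]
    rw [show (-(b:ℂ) * (‖v‖:ℂ)^2) = ((-b * ‖v‖^2 : ℝ) : ℂ) by push_cast; ring]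
    simp only [RCLike.re_to_complex]
    push_cast
    rw [show (-(b:ℂ) * (‖v‖:ℂ)^2) = ((-b * ‖v‖^2 : ℝ) : ℂ) by push_cast; ring,
      Complex.exp_ofReal_re]
  exact h2.comp_sub_right c

lemma my_null_graph (c : ℝ) : volume {x : R2 × R2 | x.2 = c • x.1} = 0 := by
  have hmeas : MeasurableSet {x : R2 × R2 | x.2 = c • x.1} :=
    (isClosed_eq continuous_snd (continuous_fst.const_smul c)).measurableSet
  rw [Measure.volume_eq_prod R2 R2, Measure.prod_apply hmeas]
  have h : ∀ a : R2, (Prod.mk a ⁻¹' {x : R2 × R2 | x.2 = c • x.1}) = {c • a} := by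
    intro a; ext b; simp [Set.mem_preimage]
  simp [h]

lemma my_null_fst : volume {x : R2 × R2 | x.1 = 0} = 0 := by
  have h : {x : R2 × R2 | x.1 = 0} = ({0} : Set R2) ×ˢ (Set.univ : Set R2) := by
    ext x; simp [Set.mem_prod, Prod.ext_iff, eq_comm]
  rw [Measure.volume_eq_prod R2 R2, h, Measure.prod_prod]
  simp

lemma my_null_set (μ₁ : ℝ) :
    volume {x : R2 × R2 | (1 - μ₁) • x.1 - μ₁ • x.2 = 0} = 0 := by
  rcases eq_or_ne μ₁ 0 with h0 | h0
  · subst h0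
    have h : {x : R2 × R2 | (1 - (0:ℝ)) • x.1 - (0:ℝ) • x.2 = 0} = {x : R2 × R2 | x.1 = 0} := by
      ext x; simp
    rw [h]; exact my_null_fst
  · have h : {x : R2 × R2 | (1 - μ₁) • x.1 - μ₁ • x.2 = 0}
        = {x : R2 × R2 | x.2 = (μ₁⁻¹ * (1 - μ₁)) • x.1} := by
      ext x
      simp only [Set.mem_setOf_eq, sub_eq_zero, mul_smul]
      rw [eq_inv_smul_iff₀ h0, eq_comm]
    rw [h]; exact my_null_graph _

lemma my_exp_sq (a : ℝ) : Real.exp a ^ 2 = Real.exp (2 * a) := by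
  rw [sq, ← Real.exp_add]; ring_nf

lemma my_pow_le_exp (n : ℕ) (t : ℝ) (ht : 0 ≤ t) :
    (1 + t) ^ (2 * n) ≤ 2 ^ (2 * n) * (1 + 4 ^ n * (n.factorial : ℝ)) * Real.exp (t ^ 2 / 4) := by
  have hfac : (1:ℝ) ≤ (n.factorial : ℝ) := by exact_mod_cast n.factorial_pos
  have h2 : t ^ (2 * n) ≤ 4 ^ n * (n.factorial : ℝ) * Real.exp (t ^ 2 / 4) := by
    have hk := Real.pow_div_factorial_le_exp (x := t ^ 2 / 4) (by positivity) n
    have h4 : t ^ (2 * n) = 4 ^ n * (t ^ 2 / 4) ^ n := by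
      rw [pow_mul, div_pow, ← mul_div_assoc, mul_comm, mul_div_assoc]
      norm_num
    rw [h4]
    have : (t ^ 2 / 4) ^ n ≤ (n.factorial : ℝ) * Real.exp (t ^ 2 / 4) := by
      rw [div_le_iff₀ (by positivity : (0:ℝ) < (n.factorial : ℝ))] at hk
      linarith [hk]
    calc (4:ℝ) ^ n * (t ^ 2 / 4) ^ n ≤ 4 ^ n * ((n.factorial : ℝ) * Real.exp (t ^ 2 / 4)) := by
          apply mul_le_mul_of_nonneg_left this (by positivity)
      _ = 4 ^ n * (n.factorial : ℝ) * Real.exp (t ^ 2 / 4) := by ring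
  have h1 : (1 + t) ^ (2 * n) ≤ 2 ^ (2 * n) * (1 + t ^ (2 * n)) := by
    rcases le_total t 1 with h | h
    · calc (1 + t) ^ (2 * n) ≤ 2 ^ (2 * n) := by
            apply pow_le_pow_left₀ (by linarith) (by linarith)
        _ ≤ 2 ^ (2 * n) * (1 + t ^ (2 * n)) := by
            apply le_mul_of_one_le_right (by positivity)
            have := pow_nonneg ht (2 * n); linarith
    · calc (1 + t) ^ (2 * n) ≤ (2 * t) ^ (2 * n) := by
            apply pow_le_pow_left₀ (by linarith) (by linarith)
        _ = 2 ^ (2 * n) * t ^ (2 * n) := mul_pow 2 t (2 * n)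
        _ ≤ 2 ^ (2 * n) * (1 + t ^ (2 * n)) := by
            apply mul_le_mul_of_nonneg_left (by linarith) (by positivity)
  have hexp1 : (1:ℝ) ≤ Real.exp (t ^ 2 / 4) := Real.one_le_exp (by positivity)
  calc (1 + t) ^ (2 * n) ≤ 2 ^ (2 * n) * (1 + t ^ (2 * n)) := h1
    _ ≤ 2 ^ (2 * n) * (1 + 4 ^ n * (n.factorial : ℝ) * Real.exp (t ^ 2 / 4)) := by
        apply mul_le_mul_of_nonneg_left (by linarith) (by positivity)
    _ ≤ 2 ^ (2 * n) * ((1 + 4 ^ n * (n.factorial : ℝ)) * Real.exp (t ^ 2 / 4)) := by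
        apply mul_le_mul_of_nonneg_left ?_ (by positivity)
        have h5 : (0:ℝ) ≤ 4 ^ n * (n.factorial : ℝ) := by positivity
        nlinarith
    _ = 2 ^ (2 * n) * (1 + 4 ^ n * (n.factorial : ℝ)) * Real.exp (t ^ 2 / 4) := by ring

lemma my_exp_arg_le (σ s t₁ t₂ : ℝ) (hσ : 0 < σ) (hσs : σ ≤ s) (hs1 : s ≤ 1)
    (hs : 0 < s) (hT : s / 8 ≤ t₁ ^ 2 + t₂ ^ 2) :
    t₁ ^ 2 / 4 + t₂ ^ 2 / 4 + (-(t₁ ^ 2) / σ ^ 2 - t₂ ^ 2 / σ ^ 2)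
      ≤ -1 / (16 * s) + (-(t₁ ^ 2) / (4 * σ ^ 2) - t₂ ^ 2 / (4 * σ ^ 2)) := by
  rw [← sub_nonneg]
  have ha : (0:ℝ) < σ ^ 2 := by positivity
  have hkey : (-1 / (16 * s) + (-(t₁ ^ 2) / (4 * σ ^ 2) - t₂ ^ 2 / (4 * σ ^ 2)))
      - (t₁ ^ 2 / 4 + t₂ ^ 2 / 4 + (-(t₁ ^ 2) / σ ^ 2 - t₂ ^ 2 / σ ^ 2))
      = (4 * s * (t₁ ^ 2 + t₂ ^ 2) * (3 - σ ^ 2) - σ ^ 2) / (16 * s * σ ^ 2) := by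
    field_simp
    ring
  rw [hkey]
  apply div_nonneg ?_ (by positivity)
  have hσ2 : σ ^ 2 ≤ s ^ 2 := by nlinarith
  have hσ1 : σ ^ 2 ≤ 1 := by nlinarith
  nlinarith [mul_le_mul_of_nonneg_left hT (by positivity : (0:ℝ) ≤ 8 * s),
    mul_nonneg (mul_nonneg (by positivity : (0:ℝ) ≤ 4 * s)
      (by nlinarith : (0:ℝ) ≤ t₁ ^ 2 + t₂ ^ 2)) (by nlinarith : (0:ℝ) ≤ 1 - σ ^ 2)]

lemma my_exp_small (s β : ℝ) (m : ℕ) (hs : 0 < s) (hβm : β ≤ m) (hlogs : Real.log s < -2) :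
    Real.exp (-1 / (16 * s)) ≤ 16 ^ (2 * m) * ((2 * m).factorial : ℝ) *
      |Real.log s| ^ (-(2 * β)) := by
  have hL : |Real.log s| = -Real.log s := abs_of_neg (by linarith)
  have hL1 : 1 ≤ |Real.log s| := by rw [hL]; linarith
  have hLpos : (0:ℝ) < |Real.log s| := by linarith
  have h1 : |Real.log s| ^ ((2 * β : ℝ)) ≤ |Real.log s| ^ (((2 * m : ℕ)) : ℝ) :=
    Real.rpow_le_rpow_of_exponent_le hL1 (by push_cast; linarith)
  have h2 : |Real.log s| ≤ s⁻¹ := by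
    rw [hL, ← Real.log_inv]
    have := Real.log_le_sub_one_of_pos (show (0:ℝ) < s⁻¹ by positivity)
    linarith
  have h3 : |Real.log s| ^ (2 * m) ≤ (s⁻¹) ^ (2 * m) := pow_le_pow_left₀ (abs_nonneg _) h2 _
  have h4 : (s⁻¹) ^ (2 * m) ≤ 16 ^ (2 * m) * ((2 * m).factorial : ℝ) * Real.exp (1 / (16 * s)) := by
    have hk := Real.pow_div_factorial_le_exp (x := 1 / (16 * s)) (by positivity) (2 * m)
    rw [div_le_iff₀ (by positivity : (0:ℝ) < (((2 * m).factorial : ℕ) : ℝ))] at hk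
    have heq : (s⁻¹) ^ (2 * m) = 16 ^ (2 * m) * (1 / (16 * s)) ^ (2 * m) := by
      rw [← mul_pow]; congr 1; field_simp
    rw [heq]
    calc (16:ℝ) ^ (2 * m) * (1 / (16 * s)) ^ (2 * m)
        ≤ 16 ^ (2 * m) * (Real.exp (1 / (16 * s)) * ((2 * m).factorial : ℝ)) :=
          mul_le_mul_of_nonneg_left hk (by positivity)
      _ = 16 ^ (2 * m) * ((2 * m).factorial : ℝ) * Real.exp (1 / (16 * s)) := by ring
  have hchain : |Real.log s| ^ ((2 * β : ℝ)) ≤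
      16 ^ (2 * m) * ((2 * m).factorial : ℝ) * Real.exp (1 / (16 * s)) := by
    calc |Real.log s| ^ ((2 * β : ℝ)) ≤ |Real.log s| ^ (((2 * m : ℕ)) : ℝ) := h1
      _ = |Real.log s| ^ (2 * m) := Real.rpow_natCast _ _
      _ ≤ (s⁻¹) ^ (2 * m) := h3
      _ ≤ _ := h4
  have hfin : Real.exp (-1 / (16 * s)) * |Real.log s| ^ ((2 * β : ℝ))
      ≤ 16 ^ (2 * m) * ((2 * m).factorial : ℝ) := by
    calc Real.exp (-1 / (16 * s)) * |Real.log s| ^ ((2 * β : ℝ))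
        ≤ Real.exp (-1 / (16 * s)) *
            (16 ^ (2 * m) * ((2 * m).factorial : ℝ) * Real.exp (1 / (16 * s))) :=
          mul_le_mul_of_nonneg_left hchain (Real.exp_pos _).le
      _ = 16 ^ (2 * m) * ((2 * m).factorial : ℝ) *
            (Real.exp (-1 / (16 * s)) * Real.exp (1 / (16 * s))) := by ring
      _ = 16 ^ (2 * m) * ((2 * m).factorial : ℝ) := by
          rw [← Real.exp_add, show -1 / (16 * s) + 1 / (16 * s) = 0 by ring,
            Real.exp_zero, mul_one]
  have hprod : |Real.log s| ^ ((2 * β : ℝ)) * |Real.log s| ^ (-(2 * β)) = 1 := by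
    rw [← Real.rpow_add hLpos]; norm_num
  calc Real.exp (-1 / (16 * s))
      = Real.exp (-1 / (16 * s)) * (|Real.log s| ^ ((2 * β : ℝ)) * |Real.log s| ^ (-(2 * β))) := by
        rw [hprod, mul_one]
    _ = (Real.exp (-1 / (16 * s)) * |Real.log s| ^ ((2 * β : ℝ))) * |Real.log s| ^ (-(2 * β)) := by
        ring
    _ ≤ 16 ^ (2 * m) * ((2 * m).factorial : ℝ) * |Real.log s| ^ (-(2 * β)) :=
        mul_le_mul_of_nonneg_right hfin (Real.rpow_nonneg (abs_nonneg _) _)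

lemma my_pointwise (μ₁ α β σ : ℝ) (p₀ : R2)
    (hμ0 : 0 ≤ μ₁) (hμ1 : μ₁ ≤ 1) (hα : 0 ≤ α) (hβ : 0 ≤ β)
    (hσ : 0 < σ) (hε : σ + ‖p₀‖ < Real.exp (-2)) (x : R2 × R2)
    (hx : (1 - μ₁) • x.1 - μ₁ • x.2 ≠ 0) :
    (Real.log (2 + ‖(1 - μ₁) • x.1 - μ₁ • x.2‖) ^ α /
        (1 + |Real.log ‖(1 - μ₁) • x.1 - μ₁ • x.2‖|) ^ β) ^ 2 *
      ((σ ^ 2 * Real.pi)⁻¹ * Real.exp (-‖x.1 - p₀‖ ^ 2 / (2 * σ ^ 2)) *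
        Real.exp (-‖x.2 + p₀‖ ^ 2 / (2 * σ ^ 2))) ^ 2
    ≤ ((3:ℝ) ^ ⌈α⌉₊ * 2 ^ ⌈β⌉₊) ^ 2 * |Real.log (σ + ‖p₀‖)| ^ (-(2 * β)) *
        ((σ ^ 2 * Real.pi)⁻¹ * Real.exp (-‖x.1 - p₀‖ ^ 2 / (2 * σ ^ 2)) *
          Real.exp (-‖x.2 + p₀‖ ^ 2 / (2 * σ ^ 2))) ^ 2
      + (3:ℝ) ^ (2 * ⌈α⌉₊) * ((2:ℝ) ^ (2 * ⌈α⌉₊) * (1 + 4 ^ ⌈α⌉₊ * (Nat.factorial ⌈α⌉₊ : ℝ))) ^ 2 *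
          ((σ ^ 2 * Real.pi)⁻¹) ^ 2 * Real.exp (-1 / (16 * (σ + ‖p₀‖))) *
          (Real.exp (-‖x.1 - p₀‖ ^ 2 / (4 * σ ^ 2)) *
            Real.exp (-‖x.2 + p₀‖ ^ 2 / (4 * σ ^ 2))) := by
  set n : ℕ := ⌈α⌉₊ with hn
  set K₂ : ℝ := (2:ℝ) ^ (2 * n) * (1 + 4 ^ n * (Nat.factorial n : ℝ)) with hK₂
  set pp : R2 := (1 - μ₁) • x.1 - μ₁ • x.2 with hpp
  set t₁ : ℝ := ‖x.1 - p₀‖ with ht₁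
  set t₂ : ℝ := ‖x.2 + p₀‖ with ht₂
  set s : ℝ := σ + ‖p₀‖ with hsdef
  have ht₁0 : 0 ≤ t₁ := norm_nonneg _
  have ht₂0 : 0 ≤ t₂ := norm_nonneg _
  have hs : 0 < s := by positivity
  have hexp2 : Real.exp (-2 : ℝ) ≤ 1 / 4 := by
    rw [Real.exp_neg]
    rw [show ((2:ℝ) = 1 + 1) by norm_num, Real.exp_add]
    have h2 : (2:ℝ) ≤ Real.exp 1 := by linarith [Real.add_one_le_exp (1:ℝ)]
    rw [show (1:ℝ)/4 = ((4:ℝ))⁻¹ by norm_num]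
    apply inv_anti₀ (by norm_num)
    nlinarith [Real.exp_pos (1:ℝ)]
  have hs14 : s ≤ 1 / 4 := le_trans hε.le hexp2
  have hs1 : s < 1 := by linarith
  have hσs : σ ≤ s := by rw [hsdef]; linarith [norm_nonneg p₀]
  have hlogs : Real.log s < -2 := by
    have := Real.log_lt_log hs hε
    rwa [Real.log_exp] at this
  have hLabs : |Real.log s| = -Real.log s := abs_of_neg (by linarith)
  have hLpos : (0:ℝ) < |Real.log s| := by rw [hLabs]; linarith
  have hA0 : (0:ℝ) < (σ ^ 2 * Real.pi)⁻¹ := by positivity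
  -- bound on ‖pp‖
  have hrep : pp = (1 - μ₁) • (x.1 - p₀) - μ₁ • (x.2 + p₀) + p₀ := by
    rw [hpp]; module
  have hp_le : ‖pp‖ ≤ s + t₁ + t₂ := by
    calc ‖pp‖ ≤ ‖(1 - μ₁) • (x.1 - p₀) - μ₁ • (x.2 + p₀)‖ + ‖p₀‖ := by
          rw [hrep]; exact norm_add_le _ _
      _ ≤ ‖(1 - μ₁) • (x.1 - p₀)‖ + ‖μ₁ • (x.2 + p₀)‖ + ‖p₀‖ := by
          linarith [norm_sub_le ((1 - μ₁) • (x.1 - p₀)) (μ₁ • (x.2 + p₀))]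
      _ = |1 - μ₁| * t₁ + |μ₁| * t₂ + ‖p₀‖ := by
          rw [norm_smul, norm_smul, Real.norm_eq_abs, Real.norm_eq_abs]
      _ ≤ 1 * t₁ + 1 * t₂ + ‖p₀‖ := by
          have h1 : |1 - μ₁| ≤ 1 := by rw [abs_of_nonneg (by linarith)]; linarith
          have h2 : |μ₁| ≤ 1 := by rw [abs_of_nonneg hμ0]; linarith
          have := mul_le_mul_of_nonneg_right h1 ht₁0
          have := mul_le_mul_of_nonneg_right h2 ht₂0
          linarith
      _ ≤ s + t₁ + t₂ := by rw [hsdef]; linarith [norm_nonneg p₀, hσ]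
  -- weight facts
  have hz0 : 0 ≤ Real.log (2 + ‖pp‖) := Real.log_nonneg (by linarith [norm_nonneg pp])
  have hzle : Real.log (2 + ‖pp‖) ≤ 1 + ‖pp‖ := by
    have := Real.log_le_sub_one_of_pos (show (0:ℝ) < 2 + ‖pp‖ by linarith [norm_nonneg pp])
    linarith
  have hnum : Real.log (2 + ‖pp‖) ^ α ≤ (2 + ‖pp‖) ^ n := by
    have hb1 : (1:ℝ) ≤ 2 + ‖pp‖ := by linarith [norm_nonneg pp]
    rcases le_total (Real.log (2 + ‖pp‖)) 1 with h | h
    · calc Real.log (2 + ‖pp‖) ^ α ≤ 1 := Real.rpow_le_one hz0 h hα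
        _ = (1:ℝ) ^ n := (one_pow n).symm
        _ ≤ (2 + ‖pp‖) ^ n := pow_le_pow_left₀ zero_le_one hb1 n
    · calc Real.log (2 + ‖pp‖) ^ α ≤ Real.log (2 + ‖pp‖) ^ (n : ℝ) :=
            Real.rpow_le_rpow_of_exponent_le h (Nat.le_ceil α)
        _ = Real.log (2 + ‖pp‖) ^ n := Real.rpow_natCast _ n
        _ ≤ (2 + ‖pp‖) ^ n := pow_le_pow_left₀ hz0 (by linarith [norm_nonneg pp]) n
  have hden1 : (1:ℝ) ≤ (1 + |Real.log ‖pp‖|) ^ β := by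
    calc (1:ℝ) = (1:ℝ) ^ β := (Real.one_rpow β).symm
      _ ≤ (1 + |Real.log ‖pp‖|) ^ β :=
          Real.rpow_le_rpow zero_le_one (by linarith [abs_nonneg (Real.log ‖pp‖)]) hβ
  have hW0 : 0 ≤ Real.log (2 + ‖pp‖) ^ α / (1 + |Real.log ‖pp‖|) ^ β :=
    div_nonneg (Real.rpow_nonneg hz0 α) (by linarith)
  set W : ℝ := Real.log (2 + ‖pp‖) ^ α / (1 + |Real.log ‖pp‖|) ^ β with hW
  set Φ : ℝ := ((σ ^ 2 * Real.pi)⁻¹ * Real.exp (-t₁ ^ 2 / (2 * σ ^ 2)) *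
      Real.exp (-t₂ ^ 2 / (2 * σ ^ 2))) with hΦ
  have hΦ0 : 0 ≤ Φ ^ 2 := sq_nonneg _
  rcases le_or_gt ‖pp‖ (Real.sqrt s) with hcase | hcase
  · -- small p: use log weight decay
    have hpp0 : 0 < ‖pp‖ := norm_pos_iff.mpr hx
    have hsq1 : Real.sqrt s < 1 := by
      rw [show (1:ℝ) = Real.sqrt 1 from Real.sqrt_one.symm]
      exact Real.sqrt_lt_sqrt hs.le hs1
    have hpplt1 : ‖pp‖ < 1 := lt_of_le_of_lt hcase hsq1
    have hlogpp : Real.log ‖pp‖ < 0 := Real.log_neg hpp0 hpplt1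
    have habs : |Real.log ‖pp‖| = -Real.log ‖pp‖ := abs_of_neg hlogpp
    have hmono : Real.log ‖pp‖ ≤ Real.log s / 2 := by
      rw [← Real.log_sqrt hs.le]
      exact Real.log_le_log hpp0 hcase
    have hlb : |Real.log s| / 2 ≤ |Real.log ‖pp‖| := by
      rw [habs, hLabs]; linarith
    have hLhalf : (1:ℝ) < |Real.log s| / 2 := by rw [hLabs]; linarith
    have hWle : W ≤ ((3:ℝ) ^ n * 2 ^ ⌈β⌉₊) * |Real.log s| ^ (-β) := by
      have hnum3 : Real.log (2 + ‖pp‖) ^ α ≤ 3 ^ n := by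
        calc Real.log (2 + ‖pp‖) ^ α ≤ (2 + ‖pp‖) ^ n := hnum
          _ ≤ 3 ^ n := pow_le_pow_left₀ (by linarith [norm_nonneg pp]) (by linarith) n
      have hdpos : (0:ℝ) < (|Real.log s| / 2) ^ β := Real.rpow_pos_of_pos (by linarith) β
      have hdle : (|Real.log s| / 2) ^ β ≤ (1 + |Real.log ‖pp‖|) ^ β :=
        Real.rpow_le_rpow (by linarith) (by linarith [abs_nonneg (Real.log ‖pp‖)]) hβ
      have step1 : W ≤ 3 ^ n / (|Real.log s| / 2) ^ β := by
        rw [hW]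
        exact div_le_div₀ (by positivity) hnum3 hdpos hdle
      have hLβne : (|Real.log s|) ^ β ≠ 0 := ne_of_gt (Real.rpow_pos_of_pos hLpos β)
      have step2 : (3:ℝ) ^ n / (|Real.log s| / 2) ^ β
          = 3 ^ n * (2:ℝ) ^ β * |Real.log s| ^ (-β) := by
        rw [Real.div_rpow (abs_nonneg _) (by norm_num : (0:ℝ) ≤ 2),
          Real.rpow_neg (abs_nonneg _)]
        field_simp
      have step3 : (2:ℝ) ^ β ≤ (2:ℝ) ^ (⌈β⌉₊ : ℕ) := by
        calc (2:ℝ) ^ β ≤ (2:ℝ) ^ ((⌈β⌉₊ : ℕ) : ℝ) :=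
              Real.rpow_le_rpow_of_exponent_le one_le_two (Nat.le_ceil β)
          _ = (2:ℝ) ^ (⌈β⌉₊ : ℕ) := Real.rpow_natCast 2 _
      calc W ≤ 3 ^ n / (|Real.log s| / 2) ^ β := step1
        _ = 3 ^ n * (2:ℝ) ^ β * |Real.log s| ^ (-β) := step2
        _ ≤ ((3:ℝ) ^ n * 2 ^ ⌈β⌉₊) * |Real.log s| ^ (-β) := by
            apply mul_le_mul_of_nonneg_right ?_ (Real.rpow_nonneg (abs_nonneg _) _)
            apply mul_le_mul_of_nonneg_left step3 (by positivity)
    have hW2 : W ^ 2 ≤ (((3:ℝ) ^ n * 2 ^ ⌈β⌉₊) * |Real.log s| ^ (-β)) ^ 2 :=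
      pow_le_pow_left₀ hW0 hWle 2
    have hRw : (((3:ℝ) ^ n * 2 ^ ⌈β⌉₊) * |Real.log s| ^ (-β)) ^ 2
        = ((3:ℝ) ^ n * 2 ^ ⌈β⌉₊) ^ 2 * |Real.log s| ^ (-(2 * β)) := by
      rw [mul_pow]
      congr 1
      rw [← Real.rpow_natCast (|Real.log s| ^ (-β)) 2, ← Real.rpow_mul (abs_nonneg _)]
      norm_num
      ring_nf
    have hmain : W ^ 2 * Φ ^ 2 ≤ ((3:ℝ) ^ n * 2 ^ ⌈β⌉₊) ^ 2 * |Real.log s| ^ (-(2 * β)) * Φ ^ 2 := by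
      rw [← hRw]
      exact mul_le_mul_of_nonneg_right hW2 hΦ0
    have hsecond : (0:ℝ) ≤ (3:ℝ) ^ (2 * n) * K₂ ^ 2 * ((σ ^ 2 * Real.pi)⁻¹) ^ 2 *
        Real.exp (-1 / (16 * s)) *
        (Real.exp (-t₁ ^ 2 / (4 * σ ^ 2)) * Real.exp (-t₂ ^ 2 / (4 * σ ^ 2))) := by positivity
    linarith [hmain, hsecond]
  · -- large p: use Gaussian decay
    have hT : s / 8 ≤ t₁ ^ 2 + t₂ ^ 2 := by
      have hsqs : Real.sqrt s * Real.sqrt s = s := Real.mul_self_sqrt hs.le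
      have hsqle : Real.sqrt s ≤ 1 / 2 := by
        rw [show (1/2 : ℝ) = Real.sqrt ((1/2)^2) from (Real.sqrt_sq (by norm_num)).symm]
        apply Real.sqrt_le_sqrt; norm_num; linarith
      have hsqpos : 0 < Real.sqrt s := Real.sqrt_pos.mpr hs
      have hssml : s ≤ Real.sqrt s / 2 := by
        have h := mul_le_mul_of_nonneg_left hsqle hsqpos.le
        rw [hsqs] at h; linarith
      have hsum : Real.sqrt s / 2 ≤ t₁ + t₂ := by
        have : Real.sqrt s < s + t₁ + t₂ := lt_of_lt_of_le hcase hp_le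
        linarith
      have h1 := mul_self_le_mul_self (by positivity : (0:ℝ) ≤ Real.sqrt s / 2) hsum
      nlinarith [sq_nonneg (t₁ - t₂), h1, hsqs]
    have hWn : W ≤ (2 + ‖pp‖) ^ n := le_trans (div_le_self (Real.rpow_nonneg hz0 α) hden1) hnum
    have hW2 : W ^ 2 ≤ (2 + ‖pp‖) ^ (2 * n) := by
      calc W ^ 2 ≤ ((2 + ‖pp‖) ^ n) ^ 2 := pow_le_pow_left₀ hW0 hWn 2
        _ = (2 + ‖pp‖) ^ (2 * n) := by rw [← pow_mul, mul_comm]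
    have hΦsq : Φ ^ 2 = ((σ ^ 2 * Real.pi)⁻¹) ^ 2 *
        Real.exp (-(t₁ ^ 2) / σ ^ 2 - t₂ ^ 2 / σ ^ 2) := by
      rw [hΦ, mul_pow, mul_pow, my_exp_sq, my_exp_sq, mul_assoc, ← Real.exp_add]
      congr 1
      field_simp
      ring
    have h3f : (2 + ‖pp‖) ^ (2 * n) ≤ 3 ^ (2 * n) * ((1 + t₁) ^ (2 * n) * (1 + t₂) ^ (2 * n)) := by
      have h3 : 2 + ‖pp‖ ≤ 3 * ((1 + t₁) * (1 + t₂)) := by nlinarith [mul_nonneg ht₁0 ht₂0]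
      calc (2 + ‖pp‖) ^ (2 * n) ≤ (3 * ((1 + t₁) * (1 + t₂))) ^ (2 * n) :=
            pow_le_pow_left₀ (by linarith [norm_nonneg pp]) h3 _
        _ = 3 ^ (2 * n) * ((1 + t₁) ^ (2 * n) * (1 + t₂) ^ (2 * n)) := by
            rw [mul_pow, mul_pow]
    have hK₂pos : (0:ℝ) < K₂ := by rw [hK₂]; positivity
    have hpoly : (1 + t₁) ^ (2 * n) * (1 + t₂) ^ (2 * n)
        ≤ K₂ ^ 2 * Real.exp (t₁ ^ 2 / 4 + t₂ ^ 2 / 4) := by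
      calc (1 + t₁) ^ (2 * n) * (1 + t₂) ^ (2 * n)
          ≤ (K₂ * Real.exp (t₁ ^ 2 / 4)) * (K₂ * Real.exp (t₂ ^ 2 / 4)) := by
            apply mul_le_mul (my_pow_le_exp n t₁ ht₁0) (my_pow_le_exp n t₂ ht₂0)
              (by positivity) (by positivity)
        _ = K₂ ^ 2 * Real.exp (t₁ ^ 2 / 4 + t₂ ^ 2 / 4) := by
            rw [Real.exp_add]; ring
    have hexpineq : Real.exp (t₁ ^ 2 / 4 + t₂ ^ 2 / 4) * Real.exp (-(t₁ ^ 2) / σ ^ 2 - t₂ ^ 2 / σ ^ 2)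
        ≤ Real.exp (-1 / (16 * s)) *
          (Real.exp (-t₁ ^ 2 / (4 * σ ^ 2)) * Real.exp (-t₂ ^ 2 / (4 * σ ^ 2))) := by
      rw [← Real.exp_add, ← Real.exp_add, ← Real.exp_add]
      apply Real.exp_le_exp.mpr
      have h := my_exp_arg_le σ s t₁ t₂ hσ hσs hs1.le hs hT
      ring_nf at h ⊢
      linarith
    calc W ^ 2 * Φ ^ 2
        ≤ (2 + ‖pp‖) ^ (2 * n) * Φ ^ 2 := mul_le_mul_of_nonneg_right hW2 hΦ0
      _ = (2 + ‖pp‖) ^ (2 * n) * (((σ ^ 2 * Real.pi)⁻¹) ^ 2 *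
            Real.exp (-(t₁ ^ 2) / σ ^ 2 - t₂ ^ 2 / σ ^ 2)) := by rw [hΦsq]
      _ ≤ (3 ^ (2 * n) * ((1 + t₁) ^ (2 * n) * (1 + t₂) ^ (2 * n))) * (((σ ^ 2 * Real.pi)⁻¹) ^ 2 *
            Real.exp (-(t₁ ^ 2) / σ ^ 2 - t₂ ^ 2 / σ ^ 2)) := by
          apply mul_le_mul_of_nonneg_right h3f (by positivity)
      _ ≤ (3 ^ (2 * n) * (K₂ ^ 2 * Real.exp (t₁ ^ 2 / 4 + t₂ ^ 2 / 4))) *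
            (((σ ^ 2 * Real.pi)⁻¹) ^ 2 * Real.exp (-(t₁ ^ 2) / σ ^ 2 - t₂ ^ 2 / σ ^ 2)) := by
          apply mul_le_mul_of_nonneg_right ?_ (by positivity)
          apply mul_le_mul_of_nonneg_left hpoly (by positivity)
      _ = (3 ^ (2 * n) * K₂ ^ 2 * ((σ ^ 2 * Real.pi)⁻¹) ^ 2) *
            (Real.exp (t₁ ^ 2 / 4 + t₂ ^ 2 / 4) * Real.exp (-(t₁ ^ 2) / σ ^ 2 - t₂ ^ 2 / σ ^ 2)) := by
          ring
      _ ≤ (3 ^ (2 * n) * K₂ ^ 2 * ((σ ^ 2 * Real.pi)⁻¹) ^ 2) *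
            (Real.exp (-1 / (16 * s)) *
              (Real.exp (-t₁ ^ 2 / (4 * σ ^ 2)) * Real.exp (-t₂ ^ 2 / (4 * σ ^ 2)))) := by
          apply mul_le_mul_of_nonneg_left hexpineq (by positivity)
      _ ≤ ((3:ℝ) ^ n * 2 ^ ⌈β⌉₊) ^ 2 * |Real.log s| ^ (-(2 * β)) * Φ ^ 2 +
            (3:ℝ) ^ (2 * n) * K₂ ^ 2 * ((σ ^ 2 * Real.pi)⁻¹) ^ 2 *
            Real.exp (-1 / (16 * s)) *
            (Real.exp (-t₁ ^ 2 / (4 * σ ^ 2)) * Real.exp (-t₂ ^ 2 / (4 * σ ^ 2))) := by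
          have h1 : (0:ℝ) ≤ ((3:ℝ) ^ n * 2 ^ ⌈β⌉₊) ^ 2 * |Real.log s| ^ (-(2 * β)) * Φ ^ 2 := by
            have := Real.rpow_nonneg (abs_nonneg (Real.log s)) (-(2 * β))
            positivity
          linarith [le_of_eq (by ring : (3 ^ (2 * n) * K₂ ^ 2 * ((σ ^ 2 * Real.pi)⁻¹) ^ 2) *
            (Real.exp (-1 / (16 * s)) *
              (Real.exp (-t₁ ^ 2 / (4 * σ ^ 2)) * Real.exp (-t₂ ^ 2 / (4 * σ ^ 2)))) =
            (3:ℝ) ^ (2 * n) * K₂ ^ 2 * ((σ ^ 2 * Real.pi)⁻¹) ^ 2 *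
            Real.exp (-1 / (16 * s)) *
            (Real.exp (-t₁ ^ 2 / (4 * σ ^ 2)) * Real.exp (-t₂ ^ 2 / (4 * σ ^ 2))))]

lemma my_phi_factor (σ : ℝ) (hσ : 0 < σ) (a b : ℝ) :
    ((σ ^ 2 * Real.pi)⁻¹ * Real.exp (-a / (2 * σ ^ 2)) * Real.exp (-b / (2 * σ ^ 2))) ^ 2
      = ((σ ^ 2 * Real.pi)⁻¹) ^ 2 * (Real.exp (-(σ ^ 2)⁻¹ * a) * Real.exp (-(σ ^ 2)⁻¹ * b)) := by
  have hσ2 : (σ:ℝ) ^ 2 ≠ 0 := by positivity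
  rw [mul_pow, mul_pow, my_exp_sq, my_exp_sq,
    show 2 * (-a / (2 * σ ^ 2)) = -(σ ^ 2)⁻¹ * a by field_simp,
    show 2 * (-b / (2 * σ ^ 2)) = -(σ ^ 2)⁻¹ * b by field_simp]
  ring

lemma my_exp_quarter (σ : ℝ) (t : ℝ) :
    Real.exp (-t / (4 * σ ^ 2)) = Real.exp (-(4 * σ ^ 2)⁻¹ * t) := by
  congr 1; rw [div_eq_mul_inv]; ring

/-- Proposition 3.1, estimate (3.12): weighted `L²` bound for the Gaussian incoming
state with mean relative momentum `p₀`, with `p := μ₂ p₁ - μ₁ p₂`. -/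
theorem weighted_bound_nonzero_momentum (μ₁ : ℝ) (hμ : μ₁ ∈ Set.Icc (0:ℝ) 1)
    (α β : ℝ) (hα : 0 ≤ α) (hβ : 0 ≤ β) :
    ∃ C > (0:ℝ), ∃ ε ∈ Set.Ioo (0:ℝ) 1, ∀ (σ : ℝ) (p₀ : R2), 0 < σ → σ + ‖p₀‖ < ε →
      Real.sqrt (∫ x : R2 × R2,
          (Real.log (2 + ‖(1 - μ₁) • x.1 - μ₁ • x.2‖) ^ α /
              (1 + |Real.log ‖(1 - μ₁) • x.1 - μ₁ • x.2‖|) ^ β) ^ 2 *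
            ((σ ^ 2 * Real.pi)⁻¹ *
              Real.exp (-‖x.1 - p₀‖ ^ 2 / (2 * σ ^ 2)) *
              Real.exp (-‖x.2 + p₀‖ ^ 2 / (2 * σ ^ 2))) ^ 2)
        ≤ C * |Real.log (σ + ‖p₀‖)| ^ (-β) := by
  obtain ⟨hμ0, hμ1⟩ := hμ
  set n : ℕ := ⌈α⌉₊ with hn
  set m : ℕ := ⌈β⌉₊ with hm
  set K₁ : ℝ := 3 ^ n * 2 ^ m with hK₁
  set K₂ : ℝ := (2:ℝ) ^ (2 * n) * (1 + 4 ^ n * (Nat.factorial n : ℝ)) with hK₂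
  set K₄ : ℝ := (16:ℝ) ^ (2 * m) * ((2 * m).factorial : ℝ) with hK₄
  have hK₂pos : (0:ℝ) < K₂ := by rw [hK₂]; positivity
  have hK₄pos : (0:ℝ) < K₄ := by rw [hK₄]; positivity
  set Csq : ℝ := K₁ ^ 2 + 16 * 3 ^ (2 * n) * K₂ ^ 2 * K₄ with hCsqdef
  have hCsq : 0 < Csq := by rw [hCsqdef, hK₁]; positivity
  refine ⟨Real.sqrt Csq, Real.sqrt_pos.mpr hCsq, Real.exp (-2),
    ⟨Real.exp_pos _, Real.exp_lt_one_iff.mpr (by norm_num)⟩, ?_⟩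
  intro σ p₀ hσ hε
  set s : ℝ := σ + ‖p₀‖ with hsdef
  have hs : 0 < s := by positivity
  have hexp2 : Real.exp (-2 : ℝ) ≤ 1 / 4 := by
    rw [Real.exp_neg, show ((2:ℝ) = 1 + 1) by norm_num, Real.exp_add,
      show (1:ℝ)/4 = ((4:ℝ))⁻¹ by norm_num]
    apply inv_anti₀ (by norm_num)
    nlinarith [Real.exp_pos (1:ℝ), Real.add_one_le_exp (1:ℝ)]
  have hs1 : s < 1 := by linarith [le_trans hε.le hexp2]
  have hσs : σ ≤ s := by rw [hsdef]; linarith [norm_nonneg p₀]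
  have hlogs : Real.log s < -2 := by
    have := Real.log_lt_log hs hε
    rwa [Real.log_exp] at this
  have hLpos : (0:ℝ) < |Real.log s| := by rw [abs_of_neg (by linarith)]; linarith
  have hσ2 : (0:ℝ) < σ ^ 2 := by positivity
  set b₁ : ℝ := (σ ^ 2)⁻¹ with hb₁
  set b₂ : ℝ := (4 * σ ^ 2)⁻¹ with hb₂
  have hb₁p : 0 < b₁ := by rw [hb₁]; positivity
  have hb₂p : 0 < b₂ := by rw [hb₂]; positivity
  set A : ℝ := (σ ^ 2 * Real.pi)⁻¹ with hA
  set c₁ : ℝ := K₁ ^ 2 * |Real.log s| ^ (-(2 * β)) * A ^ 2 with hc₁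
  set c₂ : ℝ := 3 ^ (2 * n) * K₂ ^ 2 * A ^ 2 * Real.exp (-1 / (16 * s)) with hc₂
  have hc₁0 : 0 ≤ c₁ := by
    rw [hc₁]
    have := Real.rpow_nonneg (abs_nonneg (Real.log s)) (-(2 * β))
    positivity
  have hc₂0 : 0 ≤ c₂ := by rw [hc₂, hK₂]; positivity
  set g : R2 × R2 → ℝ := fun x => c₁ * (Real.exp (-b₁ * ‖x.1 - p₀‖ ^ 2) *
      Real.exp (-b₁ * ‖x.2 - (-p₀)‖ ^ 2)) +
    c₂ * (Real.exp (-b₂ * ‖x.1 - p₀‖ ^ 2) * Real.exp (-b₂ * ‖x.2 - (-p₀)‖ ^ 2)) with hg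
  have hvol : (volume : Measure (R2 × R2)) = (volume : Measure R2).prod volume :=
    Measure.volume_eq_prod R2 R2
  have Ia := my_gauss_integrable b₁ hb₁p p₀
  have Ib := my_gauss_integrable b₁ hb₁p (-p₀)
  have Ic := my_gauss_integrable b₂ hb₂p p₀
  have Id := my_gauss_integrable b₂ hb₂p (-p₀)
  have Ig : Integrable g := by
    rw [hg, hvol]
    exact ((Ia.mul_prod Ib).const_mul c₁).add ((Ic.mul_prod Id).const_mul c₂)
  -- pointwise a.e. bound
  have hae : ∀ᵐ x : R2 × R2, (Real.log (2 + ‖(1 - μ₁) • x.1 - μ₁ • x.2‖) ^ α /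
        (1 + |Real.log ‖(1 - μ₁) • x.1 - μ₁ • x.2‖|) ^ β) ^ 2 *
      ((σ ^ 2 * Real.pi)⁻¹ * Real.exp (-‖x.1 - p₀‖ ^ 2 / (2 * σ ^ 2)) *
        Real.exp (-‖x.2 + p₀‖ ^ 2 / (2 * σ ^ 2))) ^ 2 ≤ g x := by
    have hnz : ∀ᵐ x : R2 × R2, ¬((1 - μ₁) • x.1 - μ₁ • x.2 = 0) := by
      rw [ae_iff]
      simp only [not_not]
      exact my_null_set μ₁
    filter_upwards [hnz] with x hx
    refine le_trans (my_pointwise μ₁ α β σ p₀ hμ0 hμ1 hα hβ hσ hε x hx) (le_of_eq ?_)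
    simp only [hg, hc₁, hc₂, hK₁, hK₂, hA, hb₁, hb₂, hn, hm, hsdef]
    rw [my_phi_factor σ hσ (‖x.1 - p₀‖ ^ 2) (‖x.2 + p₀‖ ^ 2)]
    simp only [sub_neg_eq_add, my_exp_quarter σ]
    ring
  have hf0 : 0 ≤ᵐ[volume] fun x : R2 × R2 => (Real.log (2 + ‖(1 - μ₁) • x.1 - μ₁ • x.2‖) ^ α /
        (1 + |Real.log ‖(1 - μ₁) • x.1 - μ₁ • x.2‖|) ^ β) ^ 2 *
      ((σ ^ 2 * Real.pi)⁻¹ * Real.exp (-‖x.1 - p₀‖ ^ 2 / (2 * σ ^ 2)) *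
        Real.exp (-‖x.2 + p₀‖ ^ 2 / (2 * σ ^ 2))) ^ 2 :=
    Filter.Eventually.of_forall fun x => by positivity
  have hmono := integral_mono_of_nonneg hf0 Ig hae
  -- compute ∫ g
  have hIg : ∫ x : R2 × R2, g x = c₁ * ((Real.pi / b₁) * (Real.pi / b₁)) +
      c₂ * ((Real.pi / b₂) * (Real.pi / b₂)) := by
    simp only [hg]
    rw [hvol]
    rw [integral_add ((Ia.mul_prod Ib).const_mul c₁) ((Ic.mul_prod Id).const_mul c₂),
      integral_const_mul, integral_const_mul,
      integral_prod_mul (f := fun v : R2 => Real.exp (-b₁ * ‖v - p₀‖ ^ 2))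
        (g := fun v : R2 => Real.exp (-b₁ * ‖v - (-p₀)‖ ^ 2)),
      integral_prod_mul (f := fun v : R2 => Real.exp (-b₂ * ‖v - p₀‖ ^ 2))
        (g := fun v : R2 => Real.exp (-b₂ * ‖v - (-p₀)‖ ^ 2)),
      my_gauss_integral b₁ hb₁p p₀, my_gauss_integral b₁ hb₁p (-p₀),
      my_gauss_integral b₂ hb₂p p₀, my_gauss_integral b₂ hb₂p (-p₀)]
  have hval : c₁ * ((Real.pi / b₁) * (Real.pi / b₁)) + c₂ * ((Real.pi / b₂) * (Real.pi / b₂))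
      = K₁ ^ 2 * |Real.log s| ^ (-(2 * β)) +
        16 * 3 ^ (2 * n) * K₂ ^ 2 * Real.exp (-1 / (16 * s)) := by
    rw [hc₁, hc₂, hb₁, hb₂, hA]
    have hσne : σ ≠ 0 := ne_of_gt hσ
    have hπ : Real.pi ≠ 0 := Real.pi_ne_zero
    field_simp
    ring
  have hexp_le : Real.exp (-1 / (16 * s)) ≤ K₄ * |Real.log s| ^ (-(2 * β)) := by
    rw [hK₄]
    exact my_exp_small s β m hs (Nat.le_ceil β) hlogs
  have hIg_le : ∫ x : R2 × R2, g x ≤ Csq * |Real.log s| ^ (-(2 * β)) := by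
    rw [hIg, hval]
    have h2 : 16 * 3 ^ (2 * n) * K₂ ^ 2 * Real.exp (-1 / (16 * s))
        ≤ 16 * 3 ^ (2 * n) * K₂ ^ 2 * (K₄ * |Real.log s| ^ (-(2 * β))) := by
      apply mul_le_mul_of_nonneg_left hexp_le
      positivity
    calc K₁ ^ 2 * |Real.log s| ^ (-(2 * β)) + 16 * 3 ^ (2 * n) * K₂ ^ 2 * Real.exp (-1 / (16 * s))
        ≤ K₁ ^ 2 * |Real.log s| ^ (-(2 * β)) +
          16 * 3 ^ (2 * n) * K₂ ^ 2 * (K₄ * |Real.log s| ^ (-(2 * β))) := by linarith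
      _ = Csq * |Real.log s| ^ (-(2 * β)) := by rw [hCsqdef]; ring
  have hhalf : (|Real.log s| ^ (-β)) ^ (2:ℕ) = |Real.log s| ^ (-(2 * β)) := by
    rw [← Real.rpow_natCast (|Real.log s| ^ (-β)) 2, ← Real.rpow_mul (abs_nonneg _)]
    norm_num
    ring_nf
  calc Real.sqrt (∫ x : R2 × R2,
          (Real.log (2 + ‖(1 - μ₁) • x.1 - μ₁ • x.2‖) ^ α /
              (1 + |Real.log ‖(1 - μ₁) • x.1 - μ₁ • x.2‖|) ^ β) ^ 2 *
            ((σ ^ 2 * Real.pi)⁻¹ *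
              Real.exp (-‖x.1 - p₀‖ ^ 2 / (2 * σ ^ 2)) *
              Real.exp (-‖x.2 + p₀‖ ^ 2 / (2 * σ ^ 2))) ^ 2)
      ≤ Real.sqrt (Csq * |Real.log s| ^ (-(2 * β))) :=
        Real.sqrt_le_sqrt (le_trans hmono hIg_le)
    _ = Real.sqrt Csq * Real.sqrt (|Real.log s| ^ (-(2 * β))) := Real.sqrt_mul hCsq.le _
    _ = Real.sqrt Csq * |Real.log s| ^ (-β) := by
        rw [← hhalf, Real.sqrt_sq (Real.rpow_nonneg (abs_nonneg _) _)]
end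

section
/- (Proposition 3.4, estimate (3.50b), bounded-logarithm version.) For all real α, β ≥ 0 and fixed μ₁ ∈ [0,1] there exist constants C > 0 and σ₀ ∈ (0,1) such that for all σ ∈ (0,σ₀): ( ∫_{ℝ²}∫_{ℝ²} [ (ln(2+|q|))^α / (1+|ln(σ|q|)|)^β ]² · |ψ_in(q₁,q₂)|² dq₁ dq₂ )^{1/2} ≤ C·(ln(1/σ))^{−β}, where q := μ₂q₁ − μ₁q₂ with μ₂ := 1−μ₁. -/
open MeasureTheory

open Real

lemma log_prod_bound (σ r : ℝ) (hσ : 0 < σ) (hr : 0 < r) :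
    Real.log (1/σ) ≤ (1 + |Real.log (σ * r)|) * (1 + Real.log (2 + r)) := by

  have h1 : Real.log (σ * r) = Real.log σ + Real.log r := Real.log_mul (ne_of_gt hσ) (ne_of_gt hr)
  have h2 : Real.log (1/σ) = - Real.log σ := by rw [one_div, Real.log_inv]
  have h3 : Real.log r ≤ Real.log (2 + r) := Real.log_le_log hr (by linarith)
  have h4 : 0 ≤ Real.log (2 + r) := Real.log_nonneg (by linarith)
  have h5 : -(Real.log σ + Real.log r) ≤ |Real.log (σ * r)| := by
    rw [h1]; exact neg_le_abs _
  have h6 : 0 ≤ |Real.log (σ * r)| := abs_nonneg _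
  nlinarith [mul_nonneg h6 h4]

lemma integrable_gauss : Integrable (fun v : R2 => Real.exp (-‖v‖^2 / 2)) := by
  have h := (GaussianFourier.integrable_cexp_neg_mul_sq_norm_add (V := R2) (b := (1/2 : ℂ))
    (by norm_num) 0 0).norm
  apply h.congr
  filter_upwards with v
  rw [Complex.norm_exp]
  norm_num
  rw [← Complex.ofReal_pow, Complex.ofReal_re]
  ring_nf


lemma integrable_G (μ₁ : ℝ) (h0 : 0 ≤ μ₁) (h1 : μ₁ ≤ 1) (α β : ℝ) (hα : 0 ≤ α) (hβ : 0 ≤ β) :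
    Integrable (fun x : R2 × R2 =>
      (Real.log (2 + ‖(1 - μ₁) • x.1 - μ₁ • x.2‖) ^ α *
          (1 + Real.log (2 + ‖(1 - μ₁) • x.1 - μ₁ • x.2‖)) ^ β) ^ 2 *
        ((Real.pi)⁻¹ * Real.exp (-‖x.1‖ ^ 2 / 2) * Real.exp (-‖x.2‖ ^ 2 / 2)) ^ 2) := by
  set γ : ℝ := 2*(α+β) with hγdef
  have hγ : 0 ≤ γ := by positivity
  have hbound : Integrable (fun x : R2 × R2 =>
      (Real.pi⁻¹^2 * Real.exp (γ + γ^2)) *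
        (Real.exp (-‖x.1‖^2 / 2) * Real.exp (-‖x.2‖^2 / 2))) := by
    apply Integrable.const_mul
    rw [Measure.volume_eq_prod]
    exact integrable_gauss.mul_prod integrable_gauss
  have hmeas : AEStronglyMeasurable (fun x : R2 × R2 =>
      (Real.log (2 + ‖(1 - μ₁) • x.1 - μ₁ • x.2‖) ^ α *
          (1 + Real.log (2 + ‖(1 - μ₁) • x.1 - μ₁ • x.2‖)) ^ β) ^ 2 *
        ((Real.pi)⁻¹ * Real.exp (-‖x.1‖ ^ 2 / 2) * Real.exp (-‖x.2‖ ^ 2 / 2)) ^ 2) volume := by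
    have hc : Continuous fun x : R2 × R2 => 2 + ‖(1 - μ₁) • x.1 - μ₁ • x.2‖ := by fun_prop
    have hne : ∀ x : R2 × R2, 2 + ‖(1 - μ₁) • x.1 - μ₁ • x.2‖ ≠ 0 := fun x => by positivity
    have hlog : Continuous fun x : R2 × R2 => Real.log (2 + ‖(1 - μ₁) • x.1 - μ₁ • x.2‖) :=
      hc.log hne
    have h1c : Continuous fun x : R2 × R2 =>
        Real.log (2 + ‖(1 - μ₁) • x.1 - μ₁ • x.2‖) ^ α :=
      hlog.rpow_const (fun x => Or.inr hα)
    have h2c : Continuous fun x : R2 × R2 =>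
        (1 + Real.log (2 + ‖(1 - μ₁) • x.1 - μ₁ • x.2‖)) ^ β :=
      (continuous_const.add hlog).rpow_const (fun x => Or.inr hβ)
    exact (((h1c.mul h2c).pow 2).mul (by fun_prop)).aestronglyMeasurable
  apply hbound.mono' hmeas
  filter_upwards with x
  set r : ℝ := ‖(1 - μ₁) • x.1 - μ₁ • x.2‖ with hrdef
  set a : ℝ := ‖x.1‖
  set b : ℝ := ‖x.2‖
  have hr0 : 0 ≤ r := norm_nonneg _
  have ha0 : 0 ≤ a := norm_nonneg _
  have hb0 : 0 ≤ b := norm_nonneg _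
  have hrab : r ≤ a + b := by
    calc r ≤ ‖(1 - μ₁) • x.1‖ + ‖μ₁ • x.2‖ := norm_sub_le _ _
      _ = |1 - μ₁| * a + |μ₁| * b := by rw [norm_smul, norm_smul]; rfl
      _ ≤ 1 * a + 1 * b := by
          gcongr
          · rw [abs_of_nonneg (by linarith)]; linarith
          · rw [abs_of_nonneg h0]; exact h1
      _ = a + b := by ring
  set ℓ : ℝ := Real.log (2 + r) with hℓdef
  have hℓpos : 0 < ℓ := Real.log_pos (by linarith)
  have hlog1 : Real.log ℓ ≤ ℓ - 1 := Real.log_le_sub_one_of_pos hℓpos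
  have hℓle : ℓ ≤ 1 + r := by
    have := Real.log_le_sub_one_of_pos (show (0:ℝ) < 2 + r by linarith)
    linarith
  have hlog2 : Real.log (1 + ℓ) ≤ ℓ := by
    have := Real.log_le_sub_one_of_pos (show (0:ℝ) < 1 + ℓ by linarith)
    linarith
  -- first factor bound
  have e1 : (ℓ ^ α * (1 + ℓ) ^ β) ^ 2 ≤ Real.exp (γ + γ * (a + b)) := by
    rw [Real.rpow_def_of_pos hℓpos, Real.rpow_def_of_pos (by linarith : (0:ℝ) < 1 + ℓ),
      ← Real.exp_add, sq, ← Real.exp_add]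
    apply Real.exp_le_exp.2
    have k1 : α * Real.log ℓ ≤ α * (1 + (a + b)) := by
      apply mul_le_mul_of_nonneg_left _ hα; linarith
    have k2 : β * Real.log (1 + ℓ) ≤ β * (1 + (a + b)) := by
      apply mul_le_mul_of_nonneg_left _ hβ; linarith
    rw [hγdef]; nlinarith
  -- second factor identity
  have e2 : ((Real.pi)⁻¹ * Real.exp (-a ^ 2 / 2) * Real.exp (-b ^ 2 / 2)) ^ 2
      = Real.pi⁻¹ ^ 2 * (Real.exp (-a^2 / 2 + -a^2 / 2) * Real.exp (-b^2 / 2 + -b^2 / 2)) := by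
    rw [Real.exp_add, Real.exp_add]; ring
  have hP0 : (0:ℝ) ≤ ((Real.pi)⁻¹ * Real.exp (-a ^ 2 / 2) * Real.exp (-b ^ 2 / 2)) ^ 2 :=
    sq_nonneg _
  have habs : |(ℓ ^ α * (1 + ℓ) ^ β) ^ 2 *
      ((Real.pi)⁻¹ * Real.exp (-a ^ 2 / 2) * Real.exp (-b ^ 2 / 2)) ^ 2|
      = (ℓ ^ α * (1 + ℓ) ^ β) ^ 2 *
      ((Real.pi)⁻¹ * Real.exp (-a ^ 2 / 2) * Real.exp (-b ^ 2 / 2)) ^ 2 := by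
    apply abs_of_nonneg; positivity
  rw [Real.norm_eq_abs, habs]
  calc (ℓ ^ α * (1 + ℓ) ^ β) ^ 2 *
      ((Real.pi)⁻¹ * Real.exp (-a ^ 2 / 2) * Real.exp (-b ^ 2 / 2)) ^ 2
      ≤ Real.exp (γ + γ * (a + b)) *
        ((Real.pi)⁻¹ * Real.exp (-a ^ 2 / 2) * Real.exp (-b ^ 2 / 2)) ^ 2 :=
        mul_le_mul_of_nonneg_right e1 hP0
    _ = Real.pi⁻¹ ^ 2 * (Real.exp (γ + γ * (a + b) + (-a^2 / 2 + -a^2 / 2) + (-b^2 / 2 + -b^2 / 2))) := by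
        rw [e2]; simp only [Real.exp_add]; ring
    _ ≤ Real.pi⁻¹ ^ 2 * (Real.exp ((γ + γ^2) + (-a^2 / 2 + -b^2 / 2))) := by
        apply mul_le_mul_of_nonneg_left _ (by positivity)
        apply Real.exp_le_exp.2
        nlinarith [sq_nonneg (γ - a), sq_nonneg (γ - b)]
    _ = Real.pi⁻¹ ^ 2 * Real.exp (γ + γ ^ 2) * (Real.exp (-a ^ 2 / 2) * Real.exp (-b ^ 2 / 2)) := by
        simp only [Real.exp_add]; ring

-- null set lemma
lemma q_ne_zero_ae (μ₁ : ℝ) (h0 : 0 ≤ μ₁) (h1 : μ₁ ≤ 1) :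
    ∀ᵐ x : R2 × R2, (1 - μ₁) • x.1 - μ₁ • x.2 ≠ 0 := by
  set f : (R2 × R2) →ₗ[ℝ] R2 :=
    (1 - μ₁) • (LinearMap.fst ℝ R2 R2) - μ₁ • (LinearMap.snd ℝ R2 R2) with hf
  have hker : LinearMap.ker f ≠ ⊤ := by
    intro htop
    set v : R2 := EuclideanSpace.single (0 : Fin 2) (1:ℝ) with hv
    have hvne : v ≠ 0 := by
      intro h
      have := congrFun (congrArg (fun w : R2 => (w : Fin 2 → ℝ)) h) 0
      simp [hv] at this
    rcases lt_or_eq_of_le h1 with hlt | heq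
    · have hmem : ((v, 0) : R2 × R2) ∈ LinearMap.ker f := htop ▸ Submodule.mem_top
      rw [LinearMap.mem_ker] at hmem
      simp [hf, LinearMap.sub_apply] at hmem
      rcases hmem with h | h
      · linarith
      · exact hvne h
    · have hmem : ((0, v) : R2 × R2) ∈ LinearMap.ker f := htop ▸ Submodule.mem_top
      rw [LinearMap.mem_ker] at hmem
      simp [hf, LinearMap.sub_apply] at hmem
      rcases hmem with h | h
      · linarith
      · exact hvne h
  have hnull : volume ((LinearMap.ker f : Submodule ℝ (R2 × R2)) : Set (R2 × R2)) = 0 := by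
    rw [Measure.volume_eq_prod]
    have : ((volume : Measure R2).prod volume).IsAddHaarMeasure :=
      Measure.prod.instIsAddHaarMeasure (volume : Measure R2) (volume : Measure R2)
    exact Measure.addHaar_submodule _ _ hker
  rw [ae_iff]
  convert hnull using 2
  ext x
  simp [hf, LinearMap.mem_ker, LinearMap.sub_apply, sub_eq_zero]

/-- Proposition 3.4, estimate (3.50b) (bounded-logarithm version): weighted `L²` bound
for the unit Gaussian `ψ_in(q₁,q₂) = ψ(q₁)ψ(q₂)`, with `q := μ₂ q₁ - μ₁ q₂`. -/
theorem weighted_bound_unit_gaussian (μ₁ : ℝ) (hμ : μ₁ ∈ Set.Icc (0:ℝ) 1)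
    (α β : ℝ) (hα : 0 ≤ α) (hβ : 0 ≤ β) :
    ∃ C > (0:ℝ), ∃ σ₀ ∈ Set.Ioo (0:ℝ) 1, ∀ σ ∈ Set.Ioo (0:ℝ) σ₀,
      Real.sqrt (∫ x : R2 × R2,
          (Real.log (2 + ‖(1 - μ₁) • x.1 - μ₁ • x.2‖) ^ α /
              (1 + |Real.log (σ * ‖(1 - μ₁) • x.1 - μ₁ • x.2‖)|) ^ β) ^ 2 *
            ((Real.pi)⁻¹ * Real.exp (-‖x.1‖ ^ 2 / 2) * Real.exp (-‖x.2‖ ^ 2 / 2)) ^ 2)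
        ≤ C * Real.log (1 / σ) ^ (-β) := by
  obtain ⟨h0, h1⟩ := hμ
  set G : R2 × R2 → ℝ := fun x =>
      (Real.log (2 + ‖(1 - μ₁) • x.1 - μ₁ • x.2‖) ^ α *
          (1 + Real.log (2 + ‖(1 - μ₁) • x.1 - μ₁ • x.2‖)) ^ β) ^ 2 *
        ((Real.pi)⁻¹ * Real.exp (-‖x.1‖ ^ 2 / 2) * Real.exp (-‖x.2‖ ^ 2 / 2)) ^ 2 with hGdef
  have hGint : Integrable G := integrable_G μ₁ h0 h1 α β hα hβ
  set I : ℝ := ∫ x : R2 × R2, G x with hIdef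
  have hInn : 0 ≤ I := integral_nonneg fun x => by positivity
  refine ⟨Real.sqrt I + 1, by positivity, 1/2, by norm_num, fun σ hσ => ?_⟩
  obtain ⟨hσ0, hσh⟩ := hσ
  set L : ℝ := Real.log (1/σ) with hLdef
  have hL : 0 < L := Real.log_pos (by rw [lt_div_iff₀ hσ0]; linarith)
  -- a.e. pointwise bound
  have haeb : ∀ᵐ x : R2 × R2,
      (Real.log (2 + ‖(1 - μ₁) • x.1 - μ₁ • x.2‖) ^ α /
          (1 + |Real.log (σ * ‖(1 - μ₁) • x.1 - μ₁ • x.2‖)|) ^ β) ^ 2 *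
        ((Real.pi)⁻¹ * Real.exp (-‖x.1‖ ^ 2 / 2) * Real.exp (-‖x.2‖ ^ 2 / 2)) ^ 2
        ≤ L ^ (-(2*β)) * G x := by
    filter_upwards [q_ne_zero_ae μ₁ h0 h1] with x hx
    set r : ℝ := ‖(1 - μ₁) • x.1 - μ₁ • x.2‖ with hrdef
    have hr : 0 < r := norm_pos_iff.2 hx
    set A : ℝ := Real.log (2 + r) ^ α with hAdef
    set B : ℝ := (1 + |Real.log (σ * r)|) ^ β with hBdef
    set C1 : ℝ := 1 + Real.log (2 + r) with hC1def
    have hlogpos : 0 < Real.log (2 + r) := Real.log_pos (by linarith)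
    have hA : 0 ≤ A := Real.rpow_nonneg hlogpos.le α
    have hBbase : (0:ℝ) < 1 + |Real.log (σ * r)| := by positivity
    have hB : 0 < B := Real.rpow_pos_of_pos hBbase β
    have hC1 : 0 < C1 := by simp only [hC1def]; linarith
    have hLβ : 0 < L ^ β := Real.rpow_pos_of_pos hL β
    have hkey : L ^ β ≤ B * C1 ^ β := by
      calc L ^ β ≤ ((1 + |Real.log (σ * r)|) * C1) ^ β :=
            Real.rpow_le_rpow hL.le (log_prod_bound σ r hσ0 hr) hβ
        _ = B * C1 ^ β := Real.mul_rpow hBbase.le hC1.le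
    have main : A / B ≤ L ^ (-β) * (A * C1 ^ β) := by
      rw [Real.rpow_neg hL.le, div_le_iff₀ hB, inv_mul_eq_div, div_mul_eq_mul_div,
        le_div_iff₀ hLβ]
      calc A * L ^ β ≤ A * (B * C1 ^ β) := mul_le_mul_of_nonneg_left hkey hA
        _ = A * C1 ^ β * B := by ring
    have hP0 : (0:ℝ) ≤ ((Real.pi)⁻¹ * Real.exp (-‖x.1‖ ^ 2 / 2) * Real.exp (-‖x.2‖ ^ 2 / 2)) ^ 2 :=
      sq_nonneg _
    have hsq : (A / B) ^ 2 ≤ (L ^ (-β) * (A * C1 ^ β)) ^ 2 :=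
      pow_le_pow_left₀ (by positivity) main 2
    have hexp : (L ^ (-β) * (A * C1 ^ β)) ^ 2 = L ^ (-(2*β)) * (A * C1 ^ β) ^ 2 := by
      rw [mul_pow]
      congr 1
      rw [← Real.rpow_natCast (L ^ (-β)) 2, ← Real.rpow_mul hL.le]
      norm_num
      ring_nf
    calc (A / B) ^ 2 * ((Real.pi)⁻¹ * Real.exp (-‖x.1‖ ^ 2 / 2) * Real.exp (-‖x.2‖ ^ 2 / 2)) ^ 2
        ≤ (L ^ (-β) * (A * C1 ^ β)) ^ 2 *
            ((Real.pi)⁻¹ * Real.exp (-‖x.1‖ ^ 2 / 2) * Real.exp (-‖x.2‖ ^ 2 / 2)) ^ 2 :=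
          mul_le_mul_of_nonneg_right hsq hP0
      _ = L ^ (-(2*β)) * G x := by rw [hexp, hGdef]; ring
  -- integral bound
  have hint : (∫ x : R2 × R2,
      (Real.log (2 + ‖(1 - μ₁) • x.1 - μ₁ • x.2‖) ^ α /
          (1 + |Real.log (σ * ‖(1 - μ₁) • x.1 - μ₁ • x.2‖)|) ^ β) ^ 2 *
        ((Real.pi)⁻¹ * Real.exp (-‖x.1‖ ^ 2 / 2) * Real.exp (-‖x.2‖ ^ 2 / 2)) ^ 2)
      ≤ L ^ (-(2*β)) * I := by
    rw [hIdef, ← integral_const_mul]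
    exact integral_mono_of_nonneg (Filter.Eventually.of_forall fun x => by positivity)
      (hGint.const_mul _) haeb
  have hsqrt2 : Real.sqrt (L ^ (-(2*β)) * I) = L ^ (-β) * Real.sqrt I := by
    rw [Real.sqrt_mul (Real.rpow_nonneg hL.le _)]
    congr 1
    rw [Real.sqrt_eq_rpow, ← Real.rpow_mul hL.le]
    norm_num
    ring_nf
  calc Real.sqrt _ ≤ Real.sqrt (L ^ (-(2*β)) * I) := Real.sqrt_le_sqrt hint
    _ = L ^ (-β) * Real.sqrt I := hsqrt2
    _ ≤ L ^ (-β) * (Real.sqrt I + 1) := by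
        have := Real.rpow_nonneg hL.le (-β); nlinarith
    _ = (Real.sqrt I + 1) * L ^ (-β) := by ring
end

section
/- (Estimate (2.15), proof of Theorem 2.1.) Let λ > 0 and let v : ℝ² → ℝ be measurable with x ↦ |x|·v(x) in L²(ℝ²). For f ∈ L²(S¹), where S¹ ⊂ ℝ² is the unit circle with arc-length measure, define g(x) := v(x)·(1/(2√2·π))·∫_{S¹} (e^{−i√λ·ν·x} − 1)·f(ν) dν for x ∈ ℝ². Then g ∈ L²(ℝ²) and ‖g‖_{L²(ℝ²)} ≤ (√λ/(2√π))·‖ |x|·v ‖_{L²(ℝ²)}·‖f‖_{L²(S¹)}. -/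
open MeasureTheory

lemma abs_exp_I_sub_one_le (t : ℝ) : ‖Complex.exp (t * Complex.I) - 1‖ ≤ |t| := by
  have hre : (Complex.exp (t * Complex.I) - 1).re = Real.cos t - 1 := by
    simp [Complex.exp_ofReal_mul_I_re]
  have him : (Complex.exp (t * Complex.I) - 1).im = Real.sin t := by
    simp [Complex.exp_ofReal_mul_I_im]
  have habs : ‖Complex.exp (t * Complex.I) - 1‖
      = Real.sqrt ((Real.cos t - 1) ^ 2 + (Real.sin t) ^ 2) := by
    rw [Complex.norm_def, Complex.normSq_apply, hre, him]
    ring_nf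
  rw [habs]
  have h1 : (Real.cos t - 1) ^ 2 + (Real.sin t) ^ 2 ≤ t ^ 2 := by
    have := Real.one_sub_sq_div_two_le_cos (x := t)
    have := Real.sin_sq_add_cos_sq t
    nlinarith
  calc Real.sqrt ((Real.cos t - 1) ^ 2 + (Real.sin t) ^ 2) ≤ Real.sqrt (t ^ 2) :=
        Real.sqrt_le_sqrt h1
    _ = |t| := by rw [Real.sqrt_sq_eq_abs]

/-- Estimate (2.15) from the proof of Theorem 2.1.  The circle `S¹` with arc-length
measure is parametrized by the angle `θ ∈ (0, 2π]`, so that `ν = (cos θ, sin θ)` and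
`L²(S¹)` is realized as `L²((0, 2π])`. -/
theorem trace_operator_low_energy_bound (lam : ℝ) (hlam : 0 < lam)
    (v : R2 → ℝ) (hv : Measurable v)
    (hvx : MemLp (fun x : R2 => ‖x‖ * v x) 2 volume)
    (f : ℝ → ℂ) (hf : MemLp f 2 (volume.restrict (Set.Ioc 0 (2 * Real.pi)))) :
    MemLp (fun x : R2 =>
        (v x : ℂ) * (1 / (2 * Real.sqrt 2 * Real.pi)) *
          ∫ θ in Set.Ioc 0 (2 * Real.pi),
            (Complex.exp (-Complex.I * Real.sqrt lam *
                (Real.cos θ * x 0 + Real.sin θ * x 1)) - 1) * f θ) 2 volume ∧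
    (eLpNorm (fun x : R2 =>
        (v x : ℂ) * (1 / (2 * Real.sqrt 2 * Real.pi)) *
          ∫ θ in Set.Ioc 0 (2 * Real.pi),
            (Complex.exp (-Complex.I * Real.sqrt lam *
                (Real.cos θ * x 0 + Real.sin θ * x 1)) - 1) * f θ) 2 volume).toReal ≤
      Real.sqrt lam / (2 * Real.sqrt Real.pi) *
        (eLpNorm (fun x : R2 => ‖x‖ * v x) 2 volume).toReal *
        (eLpNorm f 2 (volume.restrict (Set.Ioc 0 (2 * Real.pi)))).toReal := by
  have hpi : (0:ℝ) < Real.pi := Real.pi_pos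
  set μ := volume.restrict (Set.Ioc 0 (2 * Real.pi)) with hμ
  have hfin : IsFiniteMeasure μ := by
    constructor
    rw [hμ, Measure.restrict_apply MeasurableSet.univ, Set.univ_inter, Real.volume_Ioc]
    exact ENNReal.ofReal_lt_top
  set Nf : ℝ := (eLpNorm f 2 μ).toReal with hNf
  have hNf0 : 0 ≤ Nf := ENNReal.toReal_nonneg
  set c : ℝ := 1 / (2 * Real.sqrt 2 * Real.pi) with hc
  have hc0 : 0 < c := by
    apply one_div_pos.2
    positivity
  have hccast : (1 / (2 * (Real.sqrt 2 : ℂ) * (Real.pi : ℂ)) : ℂ) = ((c : ℝ) : ℂ) := by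
    rw [hc]; push_cast; ring
  simp only [hccast]
  set C : ℝ := Real.sqrt lam / (2 * Real.sqrt Real.pi) * Nf with hC
  have hC0 : 0 ≤ C := by positivity
  set g : R2 → ℂ := fun x =>
    (v x : ℂ) * (c : ℂ) *
      ∫ θ in Set.Ioc 0 (2 * Real.pi),
        (Complex.exp (-Complex.I * Real.sqrt lam *
            (Real.cos θ * x 0 + Real.sin θ * x 1)) - 1) * f θ with hg
  set w : R2 → ℝ := fun x => ‖x‖ * v x with hw
  -- L¹–L² bound on the circle
  have hfL1 : Integrable f μ := hf.integrable one_le_two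
  have hL1L2 : ∫ θ, ‖f θ‖ ∂μ ≤ Real.sqrt (2 * Real.pi) * Nf := by
    have hconj : Real.HolderConjugate 2 2 := by
      exact Real.HolderConjugate.two_two
    have h2 : (ENNReal.ofReal (2:ℝ)) = 2 := by norm_num
    have hH := integral_mul_le_Lp_mul_Lq_of_nonneg (μ := μ) hconj
      (f := fun θ => ‖f θ‖) (g := fun _ => (1:ℝ))
      (ae_of_all _ fun θ => norm_nonneg _) (ae_of_all _ fun _ => zero_le_one)
      (by rw [h2]; exact hf.norm) (by rw [h2]; exact memLp_const 1)
    simp only [mul_one, one_pow] at hH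
    have hμuniv : ∫ _θ, (1:ℝ) ∂μ = 2 * Real.pi := by
      rw [integral_const, smul_eq_mul, mul_one]
      rw [hμ, measureReal_def, Measure.restrict_apply MeasurableSet.univ, Set.univ_inter, Real.volume_Ioc,
        sub_zero, ENNReal.toReal_ofReal (by positivity)]
    have heq : (∫ θ, ‖f θ‖ ^ (2:ℝ) ∂μ) ^ ((1:ℝ)/2) = Nf := by
      rw [hNf, hf.eLpNorm_eq_integral_rpow_norm (by norm_num) (by norm_num)]
      rw [ENNReal.toReal_ofReal (by positivity)]
      norm_num
    calc ∫ θ, ‖f θ‖ ∂μ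
        ≤ (∫ θ, ‖f θ‖ ^ (2:ℝ) ∂μ) ^ ((1:ℝ)/2) * (∫ _θ, (1:ℝ) ∂μ) ^ ((1:ℝ)/2) := by
          convert hH using 3 <;> norm_num
      _ = Nf * Real.sqrt (2 * Real.pi) := by
          rw [heq, hμuniv, Real.sqrt_eq_rpow]
      _ = Real.sqrt (2 * Real.pi) * Nf := by ring
  -- pointwise bound
  have hbound : ∀ x : R2, ‖g x‖ ≤ ‖C * w x‖ := by
    intro x
    have hxnorm : ‖x‖ = Real.sqrt (x 0 ^ 2 + x 1 ^ 2) := by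
      rw [EuclideanSpace.norm_eq]
      congr 1
      rw [Fin.sum_univ_two]
      simp [Real.norm_eq_abs, sq_abs]
    have hdot : ∀ θ : ℝ, |Real.cos θ * x 0 + Real.sin θ * x 1| ≤ ‖x‖ := by
      intro θ
      rw [hxnorm]
      apply Real.abs_le_sqrt
      nlinarith [sq_nonneg (Real.cos θ * x 1 - Real.sin θ * x 0),
        Real.sin_sq_add_cos_sq θ, sq_nonneg (x 0), sq_nonneg (x 1)]
    have hexp : ∀ θ : ℝ,
        ‖Complex.exp (-Complex.I * Real.sqrt lam *
            (Real.cos θ * x 0 + Real.sin θ * x 1)) - 1‖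
          ≤ Real.sqrt lam * ‖x‖ := by
      intro θ
      set r : ℝ := Real.cos θ * x 0 + Real.sin θ * x 1 with hr
      have harg : -Complex.I * (Real.sqrt lam : ℂ) *
            ((Real.cos θ : ℂ) * (x 0 : ℂ) + (Real.sin θ : ℂ) * (x 1 : ℂ))
          = ((-(Real.sqrt lam * r) : ℝ) : ℂ) * Complex.I := by
        rw [hr]
        push_cast
        ring
      rw [harg]
      calc ‖Complex.exp (((-(Real.sqrt lam * r) : ℝ) : ℂ) * Complex.I) - 1‖
          ≤ |(-(Real.sqrt lam * r))| := abs_exp_I_sub_one_le _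
        _ = Real.sqrt lam * |r| := by
            rw [abs_neg, abs_mul, abs_of_nonneg (Real.sqrt_nonneg _)]
        _ ≤ Real.sqrt lam * ‖x‖ := by
            exact mul_le_mul_of_nonneg_left (hdot θ) (Real.sqrt_nonneg _)
    have hInt : ‖∫ θ, (Complex.exp (-Complex.I * Real.sqrt lam *
            (Real.cos θ * x 0 + Real.sin θ * x 1)) - 1) * f θ ∂μ‖
          ≤ Real.sqrt lam * ‖x‖ * (Real.sqrt (2 * Real.pi) * Nf) := by
      calc ‖∫ θ, (Complex.exp (-Complex.I * Real.sqrt lam *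
              (Real.cos θ * x 0 + Real.sin θ * x 1)) - 1) * f θ ∂μ‖
          ≤ ∫ θ, ‖(Complex.exp (-Complex.I * Real.sqrt lam *
              (Real.cos θ * x 0 + Real.sin θ * x 1)) - 1) * f θ‖ ∂μ :=
            norm_integral_le_integral_norm _
        _ ≤ ∫ θ, (Real.sqrt lam * ‖x‖) * ‖f θ‖ ∂μ := by
            refine integral_mono_of_nonneg (ae_of_all _ fun θ => norm_nonneg _)
              (hfL1.norm.const_mul _) (ae_of_all _ fun θ => ?_)
            simp only [norm_mul]
            exact mul_le_mul_of_nonneg_right (hexp θ) (norm_nonneg _)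
        _ = (Real.sqrt lam * ‖x‖) * ∫ θ, ‖f θ‖ ∂μ := integral_const_mul _ _
        _ ≤ (Real.sqrt lam * ‖x‖) * (Real.sqrt (2 * Real.pi) * Nf) := by
            apply mul_le_mul_of_nonneg_left hL1L2
            positivity
    have hconst : c * Real.sqrt (2 * Real.pi) = 1 / (2 * Real.sqrt Real.pi) := by
      rw [hc, Real.sqrt_mul (by norm_num : (0:ℝ) ≤ 2)]
      have h2 : Real.sqrt 2 > 0 := Real.sqrt_pos.2 (by norm_num)
      have hp : Real.sqrt Real.pi > 0 := Real.sqrt_pos.2 hpi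
      have hpi2 : Real.sqrt Real.pi * Real.sqrt Real.pi = Real.pi :=
        Real.mul_self_sqrt hpi.le
      field_simp
      nlinarith [h2, hp]
    have : ‖g x‖ ≤ |v x| * c * (Real.sqrt lam * ‖x‖ * (Real.sqrt (2 * Real.pi) * Nf)) := by
      rw [hg]
      simp only [norm_mul]
      rw [Complex.norm_real, Complex.norm_real, Real.norm_eq_abs, Real.norm_eq_abs,
        abs_of_pos hc0]
      exact mul_le_mul_of_nonneg_left hInt (by positivity)
    calc ‖g x‖ ≤ |v x| * c * (Real.sqrt lam * ‖x‖ * (Real.sqrt (2 * Real.pi) * Nf)) := this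
      _ = Real.sqrt lam * (c * Real.sqrt (2 * Real.pi)) * Nf * (‖x‖ * |v x|) := by ring
      _ = C * (‖x‖ * |v x|) := by rw [hconst, hC]; ring
      _ = ‖C * w x‖ := by
          rw [norm_mul, Real.norm_eq_abs, Real.norm_eq_abs, abs_of_nonneg hC0, hw,
            abs_mul, abs_of_nonneg (norm_nonneg x)]
  -- measurability
  have hgA : AEStronglyMeasurable g volume := by
    set f' : ℝ → ℂ := hf.1.mk f with hf'
    have hf'm : Measurable f' := hf.1.stronglyMeasurable_mk.measurable
    have hgeq : g = fun x : R2 =>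
        (v x : ℂ) * (c : ℂ) * ∫ θ, (Complex.exp (-Complex.I * Real.sqrt lam *
            (Real.cos θ * x 0 + Real.sin θ * x 1)) - 1) * f' θ ∂μ := by
      funext x
      simp only [hg]
      congr 1
      exact integral_congr_ae (hf.1.ae_eq_mk.mono fun θ h => by simp only [h, hf'])
    rw [hgeq]
    have hx0 : Measurable fun p : R2 × ℝ => p.1 0 :=
      (EuclideanSpace.proj (0 : Fin 2) : EuclideanSpace ℝ (Fin 2) →L[ℝ] ℝ)
        |>.continuous.measurable.comp measurable_fst
    have hx1 : Measurable fun p : R2 × ℝ => p.1 1 :=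
      (EuclideanSpace.proj (1 : Fin 2) : EuclideanSpace ℝ (Fin 2) →L[ℝ] ℝ)
        |>.continuous.measurable.comp measurable_fst
    have mcos : Measurable fun p : R2 × ℝ => ((Real.cos p.2 : ℝ) : ℂ) :=
      Complex.measurable_ofReal.comp (Real.measurable_cos.comp measurable_snd)
    have msin : Measurable fun p : R2 × ℝ => ((Real.sin p.2 : ℝ) : ℂ) :=
      Complex.measurable_ofReal.comp (Real.measurable_sin.comp measurable_snd)
    have mx0 : Measurable fun p : R2 × ℝ => ((p.1 0 : ℝ) : ℂ) :=
      Complex.measurable_ofReal.comp hx0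
    have mx1 : Measurable fun p : R2 × ℝ => ((p.1 1 : ℝ) : ℂ) :=
      Complex.measurable_ofReal.comp hx1
    have hdotC : Measurable fun p : R2 × ℝ =>
        (Real.cos p.2 : ℂ) * (p.1 0 : ℂ) + (Real.sin p.2 : ℂ) * (p.1 1 : ℂ) :=
      (mcos.mul mx0).add (msin.mul mx1)
    have hK : Measurable fun p : R2 × ℝ =>
        (Complex.exp (-Complex.I * Real.sqrt lam *
            (Real.cos p.2 * p.1 0 + Real.sin p.2 * p.1 1)) - 1) * f' p.2 := by
      apply Measurable.mul _ (hf'm.comp measurable_snd)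
      apply Measurable.sub _ measurable_const
      exact Complex.measurable_exp.comp (measurable_const.mul hdotC)
    have hG : StronglyMeasurable fun x : R2 =>
        ∫ θ, (Complex.exp (-Complex.I * Real.sqrt lam *
            (Real.cos θ * x 0 + Real.sin θ * x 1)) - 1) * f' θ ∂μ :=
      hK.stronglyMeasurable.integral_prod_right'
    exact (((Complex.measurable_ofReal.comp hv).mul
      measurable_const).stronglyMeasurable.mul hG).aestronglyMeasurable
  -- conclude
  have hCw : MemLp (fun x : R2 => C * w x) 2 volume := hvx.const_mul C
  have hmem : MemLp g 2 volume := MemLp.of_le hCw hgA (ae_of_all _ hbound)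
  refine ⟨hmem, ?_⟩
  have hle : eLpNorm g 2 volume ≤ eLpNorm (fun x : R2 => C * w x) 2 volume :=
    eLpNorm_mono hbound
  have heq2 : eLpNorm (fun x : R2 => C * w x) 2 volume
      = (‖C‖₊ : ENNReal) * eLpNorm w 2 volume := by
    have := eLpNorm_const_smul (c := C) (f := w) (p := 2) (μ := (volume : Measure R2))
    rw [← enorm_eq_nnnorm]; exact this
  have hfin2 : ((‖C‖₊ : ENNReal) * eLpNorm w 2 volume) ≠ ⊤ :=
    ENNReal.mul_ne_top ENNReal.coe_ne_top hvx.2.ne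
  calc (eLpNorm g 2 volume).toReal
      ≤ ((‖C‖₊ : ENNReal) * eLpNorm w 2 volume).toReal :=
        ENNReal.toReal_mono hfin2 (hle.trans_eq heq2)
    _ = C * (eLpNorm w 2 volume).toReal := by
        rw [ENNReal.toReal_mul, ENNReal.coe_toReal, coe_nnnorm, Real.norm_eq_abs,
          abs_of_nonneg hC0]
    _ = Real.sqrt lam / (2 * Real.sqrt Real.pi) * (eLpNorm w 2 volume).toReal * Nf := by
        rw [hC]; ring
end

section
/- (Laplace transform of I₀.) For all real p > a ≥ 0: ∫₀^∞ e^{−pλ}·I₀(aλ) dλ = 1/√(p² − a²). -/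
open MeasureTheory

/-- The modified Bessel function of order zero. -/
noncomputable def I0 (x : ℝ) : ℝ :=
  (1 / Real.pi) * ∫ θ in (0:ℝ)..Real.pi, Real.exp (x * Real.cos θ)

open Real Set Filter Topology in
/-- `∫ x in (0,∞), exp (-(b*x)) = 1/b` for `b > 0`. -/
lemma laplace_aux_exp_int {b : ℝ} (hb : 0 < b) :
    ∫ x in Set.Ioi (0:ℝ), Real.exp (-(b*x)) = 1/b := by
  have hder : ∀ x ∈ Ioi (0:ℝ), HasDerivAt (fun x => -Real.exp (-(b*x))/b)
      (Real.exp (-(b*x))) x := by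
    intro x _
    have h1 : HasDerivAt (fun x : ℝ => -(b*x)) (-b) x := by
      simpa using ((hasDerivAt_id x).const_mul (-b))
    have := ((h1.exp).neg).div_const b
    refine this.congr_deriv ?_
    field_simp
  have htend : Tendsto (fun x => -Real.exp (-(b*x))/b) atTop (𝓝 0) := by
    have h1 : Tendsto (fun x : ℝ => b * x) atTop atTop :=
      Tendsto.const_mul_atTop hb tendsto_id
    have h2 : Tendsto (fun x : ℝ => Real.exp (-(b*x))) atTop (𝓝 0) :=
      (Real.tendsto_exp_neg_atTop_nhds_zero).comp h1
    simpa using (h2.neg.div_const b)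
  have hint : IntegrableOn (fun x => Real.exp (-(b*x))) (Ioi (0:ℝ)) := by
    simpa [neg_mul] using exp_neg_integrableOn_Ioi 0 hb
  have hcont : ContinuousWithinAt (fun x => -Real.exp (-(b*x))/b) (Ici (0:ℝ)) 0 :=
    (Continuous.continuousWithinAt (by continuity))
  have := integral_Ioi_of_hasDerivAt_of_tendsto hcont hder hint htend
  rw [this]
  simp [div_eq_mul_inv]

open Real Set Filter Topology intervalIntegral in
/-- `∫ θ in 0..π, (p - a cos θ)⁻¹ = π / √(p² - a²)` for `0 ≤ a < p`. -/
lemma laplace_aux_cos_int (p a : ℝ) (ha : 0 ≤ a) (hpa : a < p) :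
    ∫ θ in (0:ℝ)..Real.pi, (p - a * Real.cos θ)⁻¹
      = Real.pi / Real.sqrt (p ^ 2 - a ^ 2) := by
  have hpos : ∀ θ : ℝ, 0 < p - a * Real.cos θ := by
    intro θ
    nlinarith [Real.cos_le_one θ, Real.neg_one_le_cos θ]
  set c := Real.sqrt (p ^ 2 - a ^ 2) with hc_def
  have hc : 0 < c := Real.sqrt_pos.mpr (by nlinarith)
  set k := Real.sqrt ((p + a) / (p - a)) with hk_def
  have hfrac : (0:ℝ) < (p + a) / (p - a) := div_pos (by linarith) (by linarith)
  have hk : 0 < k := Real.sqrt_pos.mpr hfrac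
  have hk2 : k ^ 2 = (p + a) / (p - a) := Real.sq_sqrt hfrac.le
  have hc2 : c ^ 2 = p ^ 2 - a ^ 2 := Real.sq_sqrt (by nlinarith)
  have hkc : k * (p - a) = c := by
    have h1 : (0:ℝ) ≤ k * (p - a) := mul_nonneg hk.le (by linarith)
    refine (sq_eq_sq₀ h1 hc.le).mp ?_
    rw [mul_pow, hk2, hc2]
    have hne : p - a ≠ 0 := by linarith
    field_simp
    ring
  set g : ℝ → ℝ := fun θ => (p - a * Real.cos θ)⁻¹ with hg_def
  have hgcont : Continuous g :=
    (continuous_const.sub (continuous_const.mul Real.continuous_cos)).inv₀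
      (fun θ => (hpos θ).ne')
  set F : ℝ → ℝ := fun θ => (2/c) * Real.arctan (k * Real.tan (θ/2)) with hF_def
  have hF : ∀ x ∈ Ico (0:ℝ) π, HasDerivAt F (g x) x := by
    intro x hx
    have hx2 : x / 2 ∈ Ioo (-(π/2)) (π/2) :=
      ⟨by nlinarith [hx.1, Real.pi_pos], by nlinarith [hx.2]⟩
    have hco : 0 < Real.cos (x/2) := Real.cos_pos_of_mem_Ioo hx2
    have hhalf : HasDerivAt (fun θ : ℝ => θ / 2) (1/2 : ℝ) x := by
      simpa using (hasDerivAt_id x).div_const 2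
    have ht : HasDerivAt (fun θ : ℝ => Real.tan (θ/2))
        (1 / Real.cos (x/2) ^ 2 * (1/2)) x :=
      by have := (Real.hasDerivAt_tan (x := x/2) hco.ne'); exact this.comp x hhalf
    have ht2 : HasDerivAt (fun θ : ℝ => k * Real.tan (θ/2))
        (k * (1 / Real.cos (x/2) ^ 2 * (1/2))) x := ht.const_mul k
    have harc : HasDerivAt Real.arctan
        (1 / (1 + (k * Real.tan (x/2)) ^ 2)) (k * Real.tan (x/2)) :=
      Real.hasDerivAt_arctan _
    have hcomp := ((harc.comp x ht2).const_mul (2/c))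
    refine hcomp.congr_deriv (Eq.symm ?_)
    have hs : Real.sin (x/2) ^ 2 = 1 - Real.cos (x/2) ^ 2 := by
      nlinarith [Real.sin_sq_add_cos_sq (x/2)]
    have hcx : Real.cos x = 2 * Real.cos (x/2) ^ 2 - 1 := by
      have h := Real.cos_two_mul (x/2)
      have : 2 * (x/2) = x := by ring
      rw [this] at h
      exact h
    rw [hg_def]
    simp only
    rw [Real.tan_eq_sin_div_cos, hcx]
    have hden : 0 < 1 + (k * (Real.sin (x/2) / Real.cos (x/2))) ^ 2 := by positivity
    have hpx : 0 < p - a * (2 * Real.cos (x/2) ^ 2 - 1) := by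
      rw [← hcx]; exact hpos x
    have hk2' : k ^ 2 * (p - a) = p + a := by
      have hne : p - a ≠ 0 := by linarith
      rw [hk2]; field_simp
    have key : c * (Real.cos (x/2)^2 + k^2*(1 - Real.cos (x/2)^2))
        = k * (p + a - 2*a*Real.cos (x/2)^2) := by
      rw [← hkc]
      linear_combination (k * (1 - Real.cos (x/2)^2)) * hk2'
    field_simp
    linear_combination key + c*k^2*hs
  -- the primitive of g
  set Φ : ℝ → ℝ := fun x => ∫ θ in (0:ℝ)..x, g θ with hΦ_def
  have hΦcont : Continuous Φ :=
    intervalIntegral.continuous_primitive (fun a b => hgcont.intervalIntegrable a b) 0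
  have heq : ∀ᶠ x in 𝓝[<] π, Φ x = F x := by
    filter_upwards [Ioo_mem_nhdsLT_of_mem (⟨Real.pi_pos, le_refl π⟩ : π ∈ Ioc 0 π)]
      with x hx
    have hsub : uIcc (0:ℝ) x ⊆ Ico 0 π := by
      rw [uIcc_of_le hx.1.le]
      exact fun t ht => ⟨ht.1, lt_of_le_of_lt ht.2 hx.2⟩
    have := intervalIntegral.integral_eq_sub_of_hasDerivAt
      (fun t ht => hF t (hsub ht)) (hgcont.intervalIntegrable 0 x)
    rw [hΦ_def]
    simp only
    rw [this, hF_def]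
    simp
  have hFtend : Tendsto F (𝓝[<] π) (𝓝 (π / c)) := by
    have h1 : Tendsto (fun x : ℝ => x / 2) (𝓝[<] π) (𝓝[<] (π/2)) := by
      apply tendsto_nhdsWithin_of_tendsto_nhds_of_eventually_within
      · exact ((continuous_id.div_const 2).tendsto π).mono_left nhdsWithin_le_nhds
      · filter_upwards [self_mem_nhdsWithin] with x hx
        have := Set.mem_Iio.mp hx
        exact Set.mem_Iio.mpr (by linarith)
    have h2 : Tendsto (fun x : ℝ => Real.tan (x/2)) (𝓝[<] π) atTop :=
      Real.tendsto_tan_pi_div_two.comp h1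
    have h3 : Tendsto (fun x : ℝ => k * Real.tan (x/2)) (𝓝[<] π) atTop :=
      Tendsto.const_mul_atTop hk h2
    have h4 : Tendsto (fun x : ℝ => Real.arctan (k * Real.tan (x/2))) (𝓝[<] π)
        (𝓝 (π/2)) :=
      (tendsto_nhds_of_tendsto_nhdsWithin Real.tendsto_arctan_atTop).comp h3
    have h5 := h4.const_mul (2/c)
    have : (2/c) * (π/2) = π / c := by field_simp
    rw [this] at h5
    exact h5
  have hΦtend : Tendsto Φ (𝓝[<] π) (𝓝 (Φ π)) :=
    (hΦcont.tendsto π).mono_left nhdsWithin_le_nhds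
  have hΦtend' : Tendsto Φ (𝓝[<] π) (𝓝 (π / c)) := hFtend.congr' (heq.mono fun x h => h.symm)
  exact tendsto_nhds_unique hΦtend hΦtend'

open Real Set Filter Topology

/-- Laplace transform of `I₀`: for `p > a ≥ 0`,
`∫₀^∞ e^{-pλ} I₀(aλ) dλ = 1/√(p² - a²)`. -/
theorem laplace_transform_I0 (p a : ℝ) (ha : 0 ≤ a) (hpa : a < p) :
    ∫ l in Set.Ioi (0:ℝ), Real.exp (-p * l) * I0 (a * l)
      = 1 / Real.sqrt (p ^ 2 - a ^ 2) := by
  have hpos : ∀ θ : ℝ, 0 < p - a * Real.cos θ := fun θ => by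
    nlinarith [Real.cos_le_one θ, Real.neg_one_le_cos θ]
  have hπ : (0:ℝ) < π := Real.pi_pos
  set f : ℝ → ℝ → ℝ := fun l θ => Real.exp ((a * Real.cos θ - p) * l) with hf_def
  have hstep : ∀ l : ℝ, Real.exp (-p*l) * I0 (a*l)
      = (1/π) * ∫ θ in Set.Ioc (0:ℝ) π, f l θ := by
    intro l
    rw [I0, intervalIntegral.integral_of_le hπ.le, ← mul_assoc,
      mul_comm (Real.exp (-p*l)) (1/π), mul_assoc]
    congr 1
    rw [← integral_const_mul]
    refine setIntegral_congr_fun measurableSet_Ioc fun θ _ => ?_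
    rw [← Real.exp_add, hf_def]
    ring_nf
  have hucont : Continuous (Function.uncurry f) := by
    apply Real.continuous_exp.comp
    exact ((continuous_const.mul (Real.continuous_cos.comp continuous_snd)).sub
      continuous_const).mul continuous_fst
  have hg : Integrable (fun z : ℝ × ℝ => Real.exp ((a-p)*z.1) * 1)
      ((volume.restrict (Set.Ioi (0:ℝ))).prod (volume.restrict (Set.Ioc (0:ℝ) π))) := by
    exact Integrable.mul_prod (f := fun x => Real.exp ((a-p)*x))
      (g := fun _ => (1:ℝ))
      (by simpa [neg_mul, IntegrableOn] using exp_neg_integrableOn_Ioi 0 (by linarith : (0:ℝ) < p - a))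
      (integrable_const 1)
  have hInt : Integrable (Function.uncurry f)
      ((volume.restrict (Set.Ioi (0:ℝ))).prod (volume.restrict (Set.Ioc (0:ℝ) π))) := by
    refine hg.mono' hucont.aestronglyMeasurable ?_
    rw [Measure.prod_restrict]
    refine (ae_restrict_iff' (measurableSet_Ioi.prod measurableSet_Ioc)).mpr
      (ae_of_all _ ?_)
    rintro ⟨l, θ⟩ ⟨hl, hθ⟩
    simp only [Function.uncurry, hf_def, Real.norm_eq_abs, Real.abs_exp, mul_one]
    refine Real.exp_le_exp.mpr ?_
    have hl0 : (0:ℝ) ≤ l := (Set.mem_Ioi.mp hl).le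
    nlinarith [mul_nonneg (mul_nonneg ha hl0) (sub_nonneg.mpr (Real.cos_le_one θ))]
  calc ∫ l in Set.Ioi (0:ℝ), Real.exp (-p * l) * I0 (a * l)
      = ∫ l in Set.Ioi (0:ℝ), (1/π) * ∫ θ in Set.Ioc (0:ℝ) π, f l θ := by
        simp only [hstep]
    _ = (1/π) * ∫ l in Set.Ioi (0:ℝ), ∫ θ in Set.Ioc (0:ℝ) π, f l θ :=
        integral_const_mul _ _
    _ = (1/π) * ∫ θ in Set.Ioc (0:ℝ) π, ∫ l in Set.Ioi (0:ℝ), f l θ := by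
        rw [integral_integral_swap hInt]
    _ = (1/π) * ∫ θ in Set.Ioc (0:ℝ) π, (p - a * Real.cos θ)⁻¹ := by
        congr 1
        refine setIntegral_congr_fun measurableSet_Ioc fun θ _ => ?_
        have h1 : (fun l => f l θ) = fun l => Real.exp (-((p - a * Real.cos θ) * l)) := by
          funext l; rw [hf_def]; ring_nf
        rw [h1, laplace_aux_exp_int (hpos θ), one_div]
    _ = (1/π) * (π / Real.sqrt (p ^ 2 - a ^ 2)) := by
        rw [← intervalIntegral.integral_of_le hπ.le, laplace_aux_cos_int p a ha hpa]
    _ = 1 / Real.sqrt (p ^ 2 - a ^ 2) := by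
        have hs : Real.sqrt (p ^ 2 - a ^ 2) ≠ 0 :=
          (Real.sqrt_pos.mpr (by nlinarith)).ne'
        field_simp
end

section
/- (Equation (3.66)/(a.1).) For every μ₁ ∈ [0,1], with μ₂ := 1−μ₁: L(μ₁,1−μ₁) = 1/√(1+(2μ₁−1)²). -/
open MeasureTheory

/-- The function `L(μ₁,μ₂)` of (3.65b). -/
noncomputable def Lfun (μ₁ μ₂ : ℝ) : ℝ :=
  ∫ l in Set.Ioi (0:ℝ), ∫ r in Set.Ioi (0:ℝ),
    Real.exp (-2 * l) * Real.exp (-(μ₁ ^ 2 + μ₂ ^ 2) * r) *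
      (I0 (|μ₁ - μ₂| * Real.sqrt (l * r))) ^ 2

open Real MeasureTheory Set intervalIntegral

noncomputable def cB (n : ℕ) : ℝ := n.centralBinom

lemma cB_pos (n : ℕ) : 0 < cB n := by
  have := Nat.centralBinom_pos n; unfold cB; exact_mod_cast this

lemma cB_zero : cB 0 = 1 := by simp [cB, Nat.centralBinom]

lemma cB_succ (n : ℕ) : ((n:ℝ) + 1) * cB (n+1) = (2 * (2 * n + 1)) * cB n := by
  have := congrArg (Nat.cast : ℕ → ℝ) (Nat.succ_mul_centralBinom_succ n)
  push_cast at this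
  unfold cB
  push_cast
  linarith

/-- sum of squares of binomial coefficients -/
lemma sum_choose_sq (n : ℕ) :
    ∑ k ∈ Finset.range (n+1), (n.choose k : ℝ)^2 = cB n := by
  have h := Nat.add_choose_eq n n n
  rw [Finset.Nat.sum_antidiagonal_eq_sum_range_succ_mk] at h
  unfold cB
  rw [Nat.centralBinom, two_mul, h]
  push_cast
  refine Finset.sum_congr rfl fun k hk => ?_
  rw [Finset.mem_range] at hk
  rw [Nat.choose_symm (by omega)]
  ring

noncomputable def Tc (m : ℕ) : ℝ := ∑ k ∈ Finset.range (m+1), (k:ℝ) * cB k * cB (m-k)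

lemma two_Tc (m : ℕ) : 2 * Tc m = m * ∑ k ∈ Finset.range (m+1), cB k * cB (m-k) := by
  have hrefl : Tc m = ∑ k ∈ Finset.range (m+1), ((m-k : ℕ):ℝ) * cB (m-k) * cB (m-(m-k)) :=
    (Finset.sum_range_reflect (fun k => (k:ℝ) * cB k * cB (m-k)) (m+1)).symm
  have : 2 * Tc m = ∑ k ∈ Finset.range (m+1), (m:ℝ) * (cB k * cB (m-k)) := by
    rw [two_mul]
    nth_rewrite 2 [hrefl]
    rw [Tc, ← Finset.sum_add_distrib]
    refine Finset.sum_congr rfl fun k hk => ?_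
    rw [Finset.mem_range] at hk
    have hk' : k ≤ m := by omega
    have h1 : m - (m - k) = k := by omega
    rw [h1]
    have h2 : ((m-k : ℕ):ℝ) = (m:ℝ) - k := by push_cast [hk']; ring
    rw [h2]; ring
  rw [this, ← Finset.mul_sum]

/-- convolution identity: ∑ c_k c_{n-k} = 4^n -/
lemma sum_cB_mul_cB (n : ℕ) :
    ∑ k ∈ Finset.range (n+1), cB k * cB (n-k) = 4^n := by
  induction n with
  | zero => simp [cB, Nat.centralBinom]
  | succ n ih =>
    have claim2 : Tc (n+1) = 4 * Tc n + 2 * ∑ k ∈ Finset.range (n+1), cB k * cB (n-k) := by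
      rw [Tc, Finset.sum_range_succ']
      simp only [Nat.cast_zero, zero_mul, add_zero]
      have this : ∀ j ∈ Finset.range (n+1), ((j:ℝ)+1) * cB (j+1) * cB (n-j) =
          (4*(j:ℝ)+2) * (cB j * cB (n-j)) := by
        intro j hj
        rw [cB_succ j]
        ring
      calc ∑ i ∈ Finset.range (n+1), (↑(i+1):ℝ) * cB (i+1) * cB (n+1-(i+1))
          = ∑ i ∈ Finset.range (n+1), (4*(i:ℝ)+2) * (cB i * cB (n-i)) := by
            refine Finset.sum_congr rfl fun j hj => ?_
            push_cast
            exact this j hj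
        _ = 4 * Tc n + 2 * ∑ k ∈ Finset.range (n+1), cB k * cB (n-k) := by
            rw [Tc, Finset.mul_sum, Finset.mul_sum, ← Finset.sum_add_distrib]
            exact Finset.sum_congr rfl fun j hj => by ring
    have e1 := two_Tc (n+1)
    have e3 := two_Tc n
    rw [ih] at e3
    have hpos : ((n:ℝ)+1) ≠ 0 := by positivity
    refine mul_left_cancel₀ hpos ?_
    push_cast at e1 ⊢
    rw [pow_succ]
    nlinarith [e1, e3, claim2]

lemma wallis_prod (k : ℕ) :
    ∏ i ∈ Finset.range k, ((2*(i:ℝ)+1)/(2*i+2)) = cB k / 4^k := by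
  induction k with
  | zero => simp [cB, Nat.centralBinom]
  | succ k ih =>
    rw [Finset.prod_range_succ, ih]
    have h := cB_succ k
    have hk : ((k:ℝ)+1) ≠ 0 := by positivity
    have h4 : (4:ℝ)^k ≠ 0 := by positivity
    field_simp
    linear_combination (-2 * (4:ℝ)^k) * h

lemma integral_cos_pow_odd (m : ℕ) :
    ∫ θ in (0:ℝ)..π, Real.cos θ ^ (2*m+1) = 0 := by
  have h := intervalIntegral.integral_comp_sub_left (fun x => Real.cos x ^ (2*m+1)) π
    (a := 0) (b := π)
  simp only [sub_self, sub_zero] at h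
  have h2 : (∫ x in (0:ℝ)..π, Real.cos (π - x) ^ (2*m+1)) =
      ∫ x in (0:ℝ)..π, -(Real.cos x ^ (2*m+1)) := by
    refine intervalIntegral.integral_congr fun x _ => ?_
    rw [Real.cos_pi_sub]
    rw [Odd.neg_pow ⟨m, by ring⟩]
  rw [h2, intervalIntegral.integral_neg] at h
  linarith

lemma integral_cos_pow_even' (k : ℕ) :
    ∫ θ in (0:ℝ)..π, Real.cos θ ^ (2*k) = π * cB k / 4^k := by
  have hA : ∀ a b : ℝ, IntervalIntegrable (fun x => Real.cos x ^ (2*k)) MeasureTheory.volume a b :=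
    fun a b => (Real.continuous_cos.pow _).intervalIntegrable a b
  -- ∫_{π/2}^π cos^{2k} = ∫_0^{π/2} cos^{2k}
  have h1 : (∫ x in (π/2:ℝ)..π, Real.cos x ^ (2*k)) = ∫ x in (0:ℝ)..π/2, Real.cos x ^ (2*k) := by
    have h := intervalIntegral.integral_comp_sub_left (fun x => Real.cos x ^ (2*k)) π
      (a := 0) (b := π/2)
    have e : (∫ x in (0:ℝ)..π/2, Real.cos (π - x) ^ (2*k)) =
        ∫ x in (0:ℝ)..π/2, Real.cos x ^ (2*k) := by
      refine intervalIntegral.integral_congr fun x _ => ?_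
      rw [Real.cos_pi_sub, Even.neg_pow ⟨k, by ring⟩]
    rw [e, show π - π/2 = π/2 by ring, sub_zero] at h
    exact h.symm
  -- ∫_{-π/2}^0 = ∫_0^{π/2}
  have h2 : (∫ x in (-(π/2):ℝ)..0, Real.cos x ^ (2*k)) = ∫ x in (0:ℝ)..π/2, Real.cos x ^ (2*k) := by
    have h := intervalIntegral.integral_comp_neg (fun x => Real.cos x ^ (2*k)) (a := 0) (b := π/2)
    have e : (∫ x in (0:ℝ)..π/2, Real.cos (-x) ^ (2*k)) =
        ∫ x in (0:ℝ)..π/2, Real.cos x ^ (2*k) := by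
      refine intervalIntegral.integral_congr fun x _ => ?_
      rw [Real.cos_neg]
    rw [e, neg_zero] at h
    exact h.symm
  -- ∫_0^π sin^{2k} = ∫_{-π/2}^{π/2} cos^{2k}
  have h3 : (∫ x in (0:ℝ)..π, Real.sin x ^ (2*k)) =
      ∫ x in (-(π/2):ℝ)..(π/2), Real.cos x ^ (2*k) := by
    have h := intervalIntegral.integral_comp_sub_left (fun x => Real.cos x ^ (2*k)) (π/2)
      (a := 0) (b := π)
    have e : (∫ x in (0:ℝ)..π, Real.cos (π/2 - x) ^ (2*k)) =
        ∫ x in (0:ℝ)..π, Real.sin x ^ (2*k) := by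
      refine intervalIntegral.integral_congr fun x _ => ?_
      rw [Real.cos_pi_div_two_sub]
    rw [e, show π/2 - π = -(π/2) by ring, sub_zero] at h
    exact h
  have h4 : (∫ x in (-(π/2):ℝ)..(π/2), Real.cos x ^ (2*k)) =
      (∫ x in (-(π/2):ℝ)..0, Real.cos x ^ (2*k)) + ∫ x in (0:ℝ)..(π/2), Real.cos x ^ (2*k) :=
    (intervalIntegral.integral_add_adjacent_intervals (hA _ _) (hA _ _)).symm
  have h5 : (∫ x in (0:ℝ)..π, Real.cos x ^ (2*k)) =
      (∫ x in (0:ℝ)..(π/2), Real.cos x ^ (2*k)) + ∫ x in (π/2:ℝ)..π, Real.cos x ^ (2*k) :=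
    (intervalIntegral.integral_add_adjacent_intervals (hA _ _) (hA _ _)).symm
  have hsin : (∫ x in (0:ℝ)..π, Real.sin x ^ (2*k)) = π * cB k / 4^k := by
    rw [integral_sin_pow_even, wallis_prod]
    ring
  rw [h5, h1, ← hsin, h3, h4, h2]

lemma hasSum_exp_real (y : ℝ) :
    HasSum (fun n => y^n / n.factorial) (Real.exp y) := by
  have h := NormedSpace.exp_series_hasSum_exp' (𝕂 := ℝ) y
  rw [Real.exp_eq_exp_ℝ]
  convert h using 2 with n
  · rfl
  simp [div_eq_inv_mul]

lemma cB_mul_sq_factorial (k : ℕ) : cB k * ((k.factorial : ℝ))^2 = (2*k).factorial := by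
  have h := Nat.choose_mul_factorial_mul_factorial (show k ≤ 2*k by omega)
  have : (2*k) - k = k := by omega
  rw [this] at h
  have := congrArg (Nat.cast : ℕ → ℝ) h
  push_cast at this
  unfold cB Nat.centralBinom
  push_cast
  nlinarith [this]

set_option maxHeartbeats 1000000 in
/-- power series for I0 -/
lemma I0_hasSum (x : ℝ) :
    HasSum (fun k : ℕ => x^(2*k) / (4^k * ((k.factorial : ℝ))^2)) (I0 x) := by
  -- term of full series
  set t : ℕ → ℝ := fun n => x^n / n.factorial * ((∫ θ in (0:ℝ)..π, Real.cos θ ^ n) / π)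
    with ht
  have hππ : (0:ℝ) < π := Real.pi_pos
  -- interchange
  have hI : I0 x = ∑' n, t n := by
    have hmeas : ∀ n : ℕ, AEStronglyMeasurable
        (fun θ : ℝ => (x * Real.cos θ)^n / n.factorial)
        (volume.restrict (Set.Ioc 0 π)) := fun n =>
      (Continuous.aestronglyMeasurable (by continuity))
    have hbound : ∀ (n : ℕ) (θ : ℝ), ‖(x * Real.cos θ)^n / n.factorial‖ ≤ |x|^n / n.factorial := by
      intro n θ
      rw [norm_div, norm_pow, Real.norm_natCast]
      gcongr
      rw [Real.norm_eq_abs, abs_mul]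
      calc |x| * |Real.cos θ| ≤ |x| * 1 := by gcongr; exact Real.abs_cos_le_one θ
        _ = |x| := mul_one _
    have hsum : Summable (fun n : ℕ => |x|^n / n.factorial * π) :=
      (Real.summable_pow_div_factorial |x|).mul_right π
    have hfin : (∑' n : ℕ, ∫⁻ θ, ‖(x * Real.cos θ)^n / n.factorial‖₊
        ∂(volume.restrict (Set.Ioc 0 π))) ≠ ⊤ := by
      have hle : ∀ n : ℕ, (∫⁻ θ, ‖(x * Real.cos θ)^n / n.factorial‖₊
          ∂(volume.restrict (Set.Ioc 0 π))) ≤ ENNReal.ofReal (|x|^n / n.factorial * π) := by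
        intro n
        calc (∫⁻ θ, ‖(x * Real.cos θ)^n / n.factorial‖₊ ∂(volume.restrict (Set.Ioc 0 π)))
            ≤ ∫⁻ _, ENNReal.ofReal (|x|^n / n.factorial) ∂(volume.restrict (Set.Ioc 0 π)) := by
              refine lintegral_mono fun θ => ?_
              rw [← ENNReal.ofReal_coe_nnreal, coe_nnnorm]
              exact ENNReal.ofReal_le_ofReal (hbound n θ)
          _ = ENNReal.ofReal (|x|^n / n.factorial) * (volume (Set.Ioc (0:ℝ) π)) := by
              rw [lintegral_const, Measure.restrict_apply MeasurableSet.univ, Set.univ_inter]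
          _ = ENNReal.ofReal (|x|^n / n.factorial * π) := by
              rw [Real.volume_Ioc, sub_zero, ← ENNReal.ofReal_mul (by positivity)]
      have hlt : (∑' n : ℕ, ∫⁻ θ, ‖(x * Real.cos θ)^n / n.factorial‖₊
          ∂(volume.restrict (Set.Ioc 0 π))) < ⊤ :=
        calc (∑' n : ℕ, ∫⁻ θ, ‖(x * Real.cos θ)^n / n.factorial‖₊
              ∂(volume.restrict (Set.Ioc 0 π)))
            ≤ ∑' n : ℕ, ENNReal.ofReal (|x|^n / n.factorial * π) := ENNReal.tsum_le_tsum hle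
          _ = ENNReal.ofReal (∑' n : ℕ, |x|^n / n.factorial * π) :=
              (ENNReal.ofReal_tsum_of_nonneg (fun n => by positivity) hsum).symm
          _ < ⊤ := ENNReal.ofReal_lt_top
      exact hlt.ne
    have key := MeasureTheory.integral_tsum hmeas hfin
    -- rewrite I0
    have hexp : ∀ θ : ℝ, Real.exp (x * Real.cos θ) = ∑' n, (x * Real.cos θ)^n / n.factorial :=
      fun θ => (hasSum_exp_real (x * Real.cos θ)).tsum_eq.symm
    rw [I0, intervalIntegral.integral_of_le hππ.le]
    rw [MeasureTheory.setIntegral_congr_fun measurableSet_Ioc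
      (fun θ _ => hexp θ)]
    rw [key]
    rw [← tsum_mul_left]
    congr 1
    funext n
    rw [ht]
    simp only
    rw [← intervalIntegral.integral_of_le hππ.le]
    have : ∀ θ, (x * Real.cos θ)^n / n.factorial = (x^n / n.factorial) * Real.cos θ ^ n := by
      intro θ; rw [mul_pow]; ring
    rw [intervalIntegral.integral_congr (fun θ _ => this θ), intervalIntegral.integral_const_mul]
    ring
  -- summability of t
  have hsumt : Summable t := by
    apply Summable.of_norm
    refine Summable.of_nonneg_of_le (fun n => norm_nonneg _) (fun n => ?_)
      (Real.summable_pow_div_factorial |x|)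
    · rw [ht]
      simp only
      rw [norm_mul, norm_div, norm_pow, Real.norm_natCast]
      have h1 : ‖(∫ θ in (0:ℝ)..π, Real.cos θ ^ n) / π‖ ≤ 1 := by
        rw [norm_div, Real.norm_eq_abs π, abs_of_pos hππ, div_le_one hππ]
        have := intervalIntegral.norm_integral_le_of_norm_le_const
          (f := fun θ => Real.cos θ ^ n) (a := 0) (b := π) (C := 1) (fun θ _ => by
            rw [norm_pow, Real.norm_eq_abs]
            exact pow_le_one₀ (abs_nonneg _) (Real.abs_cos_le_one θ))
        simpa [abs_of_pos hππ] using this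
      calc ‖x‖^n / n.factorial * ‖(∫ θ in (0:ℝ)..π, Real.cos θ ^ n) / π‖
          ≤ ‖x‖^n / n.factorial * 1 := by gcongr
        _ = |x|^n / n.factorial := by rw [mul_one, Real.norm_eq_abs]
  have hhs : HasSum t (I0 x) := hI ▸ hsumt.hasSum
  -- restrict to even indices
  have hodd : ∀ m ∉ Set.range (fun k : ℕ => 2*k), t m = 0 := by
    intro m hm
    have : ∃ j, m = 2*j+1 := by
      rcases Nat.even_or_odd m with he | ho
      · exfalso
        obtain ⟨j, hj⟩ := he
        exact hm ⟨j, show 2*j = m by omega⟩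
      · obtain ⟨j, hj⟩ := ho; exact ⟨j, by omega⟩
    obtain ⟨j, rfl⟩ := this
    rw [ht]
    simp [integral_cos_pow_odd j]
  have hinj : Function.Injective (fun k : ℕ => 2*k) := fun a b h => by
    have h' : 2*a = 2*b := h
    omega
  have := (Function.Injective.hasSum_iff hinj hodd).mpr hhs
  convert this using 1
  funext k
  simp only [Function.comp, ht]
  rw [integral_cos_pow_even' k, ← cB_mul_sq_factorial k]
  have h4 : (4:ℝ)^k ≠ 0 := by positivity
  have hf : ((k.factorial : ℝ))^2 ≠ 0 := by positivity
  have hcb : cB k ≠ 0 := by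
    have : (0:ℝ) < cB k := by unfold cB; exact_mod_cast Nat.centralBinom_pos k
    exact this.ne'
  have hπ : π ≠ 0 := Real.pi_ne_zero
  field_simp

lemma cB_le (n : ℕ) : cB n ≤ 4^n := by
  have h := sum_cB_mul_cB n
  have : cB n * cB (n - n) ≤ ∑ k ∈ Finset.range (n+1), cB k * cB (n-k) :=
    Finset.single_le_sum (f := fun k => cB k * cB (n-k))
      (fun k _ => le_of_lt (mul_pos (cB_pos k) (cB_pos (n-k)))) (Finset.self_mem_range_succ n)
  rw [h] at this
  have h0 : cB (n - n) = 1 := by simp [cB, Nat.centralBinom]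
  nlinarith [this, cB_pos n]

/-- key inner-sum identity -/
lemma sum_inv_factorials (n : ℕ) :
    ∑ k ∈ Finset.range (n+1),
      (1 / (4^k * ((k.factorial:ℝ))^2)) * (1 / (4^(n-k) * (((n-k).factorial:ℝ))^2)) =
    cB n / (4^n * ((n.factorial:ℝ))^2) := by
  have hfac : ∀ k ∈ Finset.range (n+1),
      (1 / (4^k * ((k.factorial:ℝ))^2)) * (1 / (4^(n-k) * (((n-k).factorial:ℝ))^2)) =
      (n.choose k : ℝ)^2 / (4^n * ((n.factorial:ℝ))^2) := by
    intro k hk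
    rw [Finset.mem_range] at hk
    have hk' : k ≤ n := by omega
    rw [Nat.cast_choose ℝ hk']
    have h1 : (4:ℝ)^k * 4^(n-k) = 4^n := by
      rw [← pow_add]; congr 1; omega
    have e2 : ((k.factorial:ℝ)) ≠ 0 := by positivity
    have e3 : (((n-k).factorial:ℝ)) ≠ 0 := by positivity
    have e4 : ((n.factorial:ℝ)) ≠ 0 := by positivity
    field_simp
    rw [← h1]
  rw [Finset.sum_congr rfl hfac, ← Finset.sum_div, sum_choose_sq]

/-- power series for I0² -/
lemma I0_sq_hasSum (x : ℝ) :
    HasSum (fun n : ℕ => cB n / (4^n * ((n.factorial:ℝ))^2) * (x^2)^n) (I0 x ^ 2) := by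
  set f : ℕ → ℝ := fun k => x^(2*k) / (4^k * ((k.factorial : ℝ))^2) with hf
  have hsumf := I0_hasSum x
  have hnorm : Summable fun k => ‖f k‖ := by
    have := I0_hasSum |x|
    refine this.summable.congr fun k => ?_
    rw [hf]
    simp only [norm_div, norm_pow, Real.norm_eq_abs]
    rw [abs_of_pos (show (0:ℝ) < 4^k * ((k.factorial:ℝ))^2 by positivity)]
  have hmul := tsum_mul_tsum_eq_tsum_sum_range_of_summable_norm hnorm hnorm
  have hsummul := (summable_norm_sum_mul_range_of_summable_norm hnorm hnorm).of_norm
  rw [hsumf.tsum_eq] at hmul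
  have hval : (fun n : ℕ => ∑ k ∈ Finset.range (n+1), f k * f (n-k)) =
      fun n : ℕ => cB n / (4^n * ((n.factorial:ℝ))^2) * (x^2)^n := by
    funext n
    have : ∀ k ∈ Finset.range (n+1), f k * f (n-k) =
        ((1 / (4^k * ((k.factorial:ℝ))^2)) * (1 / (4^(n-k) * (((n-k).factorial:ℝ))^2))) *
          (x^2)^n := by
      intro k hk
      rw [Finset.mem_range] at hk
      rw [hf]
      simp only
      rw [div_mul_div_comm, ← pow_add]
      have h2 : 2*k + 2*(n-k) = 2*n := by omega
      rw [h2, pow_mul]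
      ring
    rw [Finset.sum_congr rfl this, ← Finset.sum_mul, sum_inv_factorials]
  have : HasSum (fun n : ℕ => ∑ k ∈ Finset.range (n+1), f k * f (n-k)) (I0 x ^ 2) := by
    have := hsummul.hasSum
    rwa [← hmul, ← pow_two] at this
  rwa [hval] at this

/-- Gamma-type integral -/
lemma integral_pow_mul_exp (n : ℕ) {r : ℝ} (hr : 0 < r) :
    ∫ t in Ioi (0:ℝ), t^n * Real.exp (-(r*t)) = n.factorial / r^(n+1) := by
  have h := Real.integral_rpow_mul_exp_neg_mul_Ioi (a := (n:ℝ)+1) (r := r)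
    (by positivity) hr
  have hcongr : ∀ t ∈ Ioi (0:ℝ), t ^ (((n:ℝ)+1) - 1) * Real.exp (-(r*t)) =
      t^n * Real.exp (-(r*t)) := by
    intro t ht
    rw [add_sub_cancel_right, Real.rpow_natCast]
  rw [setIntegral_congr_fun measurableSet_Ioi hcongr] at h
  rw [h, Real.Gamma_nat_eq_factorial]
  rw [show ((n:ℝ)+1) = ((n+1 : ℕ):ℝ) by push_cast; ring]
  rw [Real.rpow_natCast]
  rw [div_pow, one_pow]
  ring

lemma integrableOn_pow_mul_exp (n : ℕ) {r : ℝ} (hr : 0 < r) :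
    IntegrableOn (fun t => t^n * Real.exp (-(r*t))) (Ioi (0:ℝ)) := by
  have h := integrableOn_rpow_mul_exp_neg_mul_rpow (s := (n:ℝ)) (p := 1) (b := r)
    (lt_of_lt_of_le neg_one_lt_zero (Nat.cast_nonneg n)) zero_lt_one hr
  refine h.congr_fun ?_ measurableSet_Ioi
  intro t ht
  simp [Real.rpow_natCast, Real.rpow_one, neg_mul]

/-- generating function of central binomial coefficients -/
lemma tsum_cB {s : ℝ} (h0 : 0 ≤ s) (h1 : s < 1) :
    ∑' n : ℕ, cB n * (s/4)^n = 1 / Real.sqrt (1-s) := by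
  set u : ℕ → ℝ := fun n => cB n * (s/4)^n with hu
  have hle : ∀ n, ‖u n‖ ≤ s^n := by
    intro n
    rw [hu]
    simp only
    rw [Real.norm_eq_abs, abs_of_nonneg (mul_nonneg (cB_pos n).le (by positivity))]
    rw [div_pow]
    rw [div_eq_mul_inv, ← mul_assoc]
    calc cB n * s^n * ((4:ℝ)^n)⁻¹ ≤ 4^n * s^n * ((4:ℝ)^n)⁻¹ := by
          gcongr
          exact cB_le n
      _ = s^n := by
          field_simp
  have hnorm : Summable fun n => ‖u n‖ :=
    Summable.of_nonneg_of_le (fun n => norm_nonneg _) hle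
      (summable_geometric_of_lt_one h0 h1)
  have hmul := tsum_mul_tsum_eq_tsum_sum_range_of_summable_norm hnorm hnorm
  have hinner : (fun n : ℕ => ∑ k ∈ Finset.range (n+1), u k * u (n-k)) = fun n : ℕ => s^n := by
    funext n
    have : ∀ k ∈ Finset.range (n+1), u k * u (n-k) = (cB k * cB (n-k)) * (s/4)^n := by
      intro k hk
      rw [Finset.mem_range] at hk
      rw [hu]
      simp only
      rw [mul_mul_mul_comm, ← pow_add]
      congr 3
      omega
    rw [Finset.sum_congr rfl this, ← Finset.sum_mul, sum_cB_mul_cB]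
    rw [div_pow]
    field_simp
  rw [hinner] at hmul
  rw [tsum_geometric_of_lt_one h0 h1] at hmul
  -- hmul : (∑' u) * (∑' u) = (1-s)⁻¹
  have hF0 : 0 ≤ ∑' n, u n := tsum_nonneg fun n =>
    mul_nonneg (cB_pos n).le (by positivity)
  have h1s : (0:ℝ) < 1 - s := by linarith
  have : ∑' n, u n = Real.sqrt ((1-s)⁻¹) := by
    rw [← hmul, ← pow_two, Real.sqrt_sq hF0]
  rw [this, Real.sqrt_inv, one_div]

/-- interchange of sum and integral for series of Gamma-type integrands -/
lemma swap_lemma {K : ℕ → ℝ} (hK : ∀ n, 0 ≤ K n) {r : ℝ} (hr : 0 < r)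
    (hsum : Summable fun n => K n * (n.factorial / r^(n+1))) :
    ∫ t in Ioi (0:ℝ), (∑' n : ℕ, K n * (t^n * Real.exp (-(r*t)))) =
      ∑' n : ℕ, K n * (n.factorial / r^(n+1)) := by
  have hmeas : ∀ n : ℕ, AEStronglyMeasurable (fun t : ℝ => K n * (t^n * Real.exp (-(r*t))))
      (volume.restrict (Ioi 0)) := fun n => (Continuous.aestronglyMeasurable (by continuity))
  have hint : ∀ n : ℕ, IntegrableOn (fun t : ℝ => K n * (t^n * Real.exp (-(r*t)))) (Ioi 0) :=
    fun n => (integrableOn_pow_mul_exp n hr).const_mul (K n)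
  have hval : ∀ n : ℕ, ∫ t in Ioi (0:ℝ), K n * (t^n * Real.exp (-(r*t))) =
      K n * (n.factorial / r^(n+1)) := by
    intro n
    rw [MeasureTheory.integral_const_mul, integral_pow_mul_exp n hr]
  have hnn : ∀ n : ℕ, (0 : ℝ → ℝ) ≤ᵐ[volume.restrict (Ioi 0)]
      (fun t : ℝ => K n * (t^n * Real.exp (-(r*t)))) := by
    intro n
    refine (ae_restrict_iff' measurableSet_Ioi).mpr (ae_of_all _ fun t ht => ?_)
    have ht' : (0:ℝ) < t := ht
    have := hK n
    simp only [Pi.zero_apply]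
    positivity
  have h1 : ∀ n : ℕ, (∫⁻ t, ‖K n * (t^n * Real.exp (-(r*t)))‖₊ ∂(volume.restrict (Ioi 0)))
      = ENNReal.ofReal (K n * (n.factorial / r^(n+1))) := by
    intro n
    have e1 : (∫⁻ t, ‖K n * (t^n * Real.exp (-(r*t)))‖₊ ∂(volume.restrict (Ioi 0)))
        = ∫⁻ t, ENNReal.ofReal (K n * (t^n * Real.exp (-(r*t)))) ∂(volume.restrict (Ioi 0)) := by
      refine lintegral_congr_ae ?_
      filter_upwards [hnn n] with t htnn
      rw [← ENNReal.ofReal_coe_nnreal, coe_nnnorm, Real.norm_eq_abs,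
        abs_of_nonneg (by simpa using htnn)]
    rw [e1, ← MeasureTheory.ofReal_integral_eq_lintegral_ofReal (hint n) (hnn n), hval n]
  have hfin : (∑' n : ℕ, ∫⁻ t, ‖K n * (t^n * Real.exp (-(r*t)))‖₊
      ∂(volume.restrict (Ioi 0))) ≠ ⊤ := by
    rw [tsum_congr h1]
    rw [← ENNReal.ofReal_tsum_of_nonneg (fun n => mul_nonneg (hK n)
      (div_nonneg (Nat.cast_nonneg _) (pow_nonneg hr.le _))) hsum]
    exact ENNReal.ofReal_ne_top
  rw [MeasureTheory.integral_tsum hmeas hfin]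
  exact tsum_congr hval

/-- Equation (3.66)/(a.1): `L(μ₁, 1-μ₁) = 1/√(1+(2μ₁-1)²)`. -/
theorem Lfun_eval (μ₁ : ℝ) (hμ : μ₁ ∈ Set.Icc (0:ℝ) 1) :
    Lfun μ₁ (1 - μ₁) = 1 / Real.sqrt (1 + (2 * μ₁ - 1) ^ 2) := by
  obtain ⟨A, hA⟩ : ∃ x : ℝ, x = (2*μ₁ - 1)^2 := ⟨_, rfl⟩
  have hA0 : 0 ≤ A := hA ▸ sq_nonneg _
  obtain ⟨p, hp⟩ : ∃ x : ℝ, x = μ₁^2 + (1-μ₁)^2 := ⟨_, rfl⟩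
  have hpA : p = (1+ A)/2 := by rw [hp, hA]; ring
  have hp0 : 0 < p := by rw [hpA]; nlinarith
  obtain ⟨C, hC⟩ : ∃ f : ℕ → ℝ, f = fun n => cB n / (4^n * ((n.factorial:ℝ))^2) := ⟨_, rfl⟩
  have hC0 : ∀ n, 0 ≤ C n := fun n => by
    have := cB_pos n
    rw [hC]; positivity
  -- key bound : C n ≤ 1/(n!)^2
  have hCle' : ∀ n : ℕ, C n ≤ 1 / ((n.factorial:ℝ))^2 := by
    intro n
    rw [hC]
    have h4 : (0:ℝ) < 4^n := by positivity
    have hf : (0:ℝ) < ((n.factorial:ℝ))^2 := by positivity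
    rw [div_le_div_iff₀ (by positivity) hf]
    calc cB n * ((n.factorial:ℝ))^2 ≤ 4^n * ((n.factorial:ℝ))^2 := by
          gcongr; exact cB_le n
      _ = 1 * (4^n * ((n.factorial:ℝ))^2) := by ring
  -- inner integral evaluation for l > 0
  have hinner : ∀ l ∈ Ioi (0:ℝ),
      (∫ r in Ioi (0:ℝ), Real.exp (-2 * l) * Real.exp (-(μ₁ ^ 2 + (1-μ₁) ^ 2) * r) *
        (I0 (|μ₁ - (1-μ₁)| * Real.sqrt (l * r))) ^ 2) =
      ∑' n : ℕ, (C n * A^n * (n.factorial / p^(n+1))) * (l^n * Real.exp (-(2*l))) := by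
    intro l hl
    have hl' : (0:ℝ) < l := hl
    -- pointwise rewriting of integrand on Ioi 0
    have hpt : ∀ r ∈ Ioi (0:ℝ),
        Real.exp (-2 * l) * Real.exp (-(μ₁ ^ 2 + (1-μ₁) ^ 2) * r) *
          (I0 (|μ₁ - (1-μ₁)| * Real.sqrt (l * r))) ^ 2 =
        Real.exp (-(2*l)) * ∑' n : ℕ, (C n * (A*l)^n) * (r^n * Real.exp (-(p*r))) := by
      intro r hr
      have hr' : (0:ℝ) < r := hr
      rw [neg_mul]
      have hx : (|μ₁ - (1-μ₁)| * Real.sqrt (l * r))^2 = A*l*r := by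
        rw [mul_pow, sq_abs, Real.sq_sqrt (by positivity)]
        rw [hA]
        ring
      have hs := I0_sq_hasSum (|μ₁ - (1-μ₁)| * Real.sqrt (l * r))
      rw [hx] at hs
      have hs2 := hs.mul_right (Real.exp (-(p*r)))
      have : (fun n : ℕ => cB n / (4^n * ((n.factorial:ℝ))^2) * (A*l*r)^n * Real.exp (-(p*r)))
          = fun n : ℕ => (C n * (A*l)^n) * (r^n * Real.exp (-(p*r))) := by
        funext n
        rw [hC]
        simp only
        rw [show A*l*r = (A*l)*r by ring, mul_pow]
        ring
      rw [this] at hs2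
      rw [hs2.tsum_eq]
      have harg : -(μ₁ ^ 2 + (1-μ₁) ^ 2) * r = -(p*r) := by rw [hp]; ring
      rw [harg]
      ring
    rw [setIntegral_congr_fun measurableSet_Ioi hpt]
    rw [MeasureTheory.integral_const_mul]
    have hsum1 : Summable fun n : ℕ => (C n * (A*l)^n) * (n.factorial / p^(n+1)) := by
      refine Summable.of_nonneg_of_le
        (fun n => mul_nonneg (mul_nonneg (hC0 n) (pow_nonneg (mul_nonneg hA0 hl'.le) n))
          (div_nonneg (Nat.cast_nonneg _) (pow_nonneg hp0.le _)))
        (fun n => ?_)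
        (((Real.summable_pow_div_factorial (A*l/p)).mul_left (1/p)))
      have hAl : (0:ℝ) ≤ A*l := mul_nonneg hA0 hl'.le
      calc (C n * (A*l)^n) * (n.factorial / p^(n+1))
          ≤ (1 / ((n.factorial:ℝ))^2 * (A*l)^n) * (n.factorial / p^(n+1)) :=
            mul_le_mul_of_nonneg_right
              (mul_le_mul_of_nonneg_right (hCle' n) (pow_nonneg hAl n))
              (div_nonneg (Nat.cast_nonneg _) (pow_nonneg hp0.le _))
        _ = 1/p * ((A*l/p)^n / n.factorial) := by
            have hfn : (0:ℝ) < (n.factorial:ℝ) := by positivity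
            rw [div_pow]
            field_simp
            ring
    rw [swap_lemma (fun n => mul_nonneg (hC0 n) (pow_nonneg (mul_nonneg hA0 hl'.le) n)) hp0 hsum1]
    rw [← tsum_mul_left]
    refine tsum_congr fun n => ?_
    rw [mul_pow]
    ring
  rw [Lfun]
  rw [setIntegral_congr_fun measurableSet_Ioi hinner]
  have hsum2 : Summable fun n : ℕ => (C n * A^n * (n.factorial / p^(n+1))) *
      (n.factorial / (2:ℝ)^(n+1)) := by
    have hratio : A/(2*p) < 1 := by
      rw [hpA]
      rw [div_lt_one (by nlinarith)]
      nlinarith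
    have hratio0 : 0 ≤ A/(2*p) := div_nonneg hA0 (by linarith [hp0])
    refine Summable.of_nonneg_of_le
      (fun n => mul_nonneg
        (mul_nonneg (mul_nonneg (hC0 n) (pow_nonneg hA0 n))
          (div_nonneg (Nat.cast_nonneg _) (pow_nonneg hp0.le _)))
        (div_nonneg (Nat.cast_nonneg _) (by positivity)))
      (fun n => ?_)
      ((summable_geometric_of_lt_one hratio0 hratio).mul_left (1/(2*p)))
    have hfn : (0:ℝ) < (n.factorial:ℝ) := by positivity
    have e : (C n * A^n * (n.factorial / p^(n+1))) * (n.factorial / (2:ℝ)^(n+1))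
        = (cB n / 4^n) * (A/(2*p))^n * (1/(2*p)) := by
      rw [hC]
      simp only
      have hpne : p ≠ 0 := hp0.ne'
      rw [div_pow A (2*p) n, mul_pow 2 p n]
      field_simp
      ring
    rw [e]
    calc (cB n / 4^n) * (A/(2*p))^n * (1/(2*p))
        ≤ 1 * (A/(2*p))^n * (1/(2*p)) := by
          have h1 : cB n / 4^n ≤ 1 := by
            rw [div_le_one (by positivity)]
            exact cB_le n
          have h2 : (0:ℝ) ≤ (A/(2*p))^n := pow_nonneg hratio0 n
          have h3 : (0:ℝ) ≤ 1/(2*p) := by positivity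
          exact mul_le_mul_of_nonneg_right (mul_le_mul_of_nonneg_right h1 h2) h3
      _ = 1/(2*p) * (A/(2*p))^n := by ring
  rw [swap_lemma (fun n => mul_nonneg (mul_nonneg (hC0 n) (pow_nonneg hA0 n))
    (div_nonneg (Nat.cast_nonneg _) (pow_nonneg hp0.le _))) two_pos hsum2]
  -- now evaluate the sum
  obtain ⟨σ, hσ⟩ : ∃ x : ℝ, x = A/(1+A) := ⟨_, rfl⟩
  have hσ0 : 0 ≤ σ := by
    rw [hσ]
    exact div_nonneg hA0 (by nlinarith)
  have hσ1 : σ < 1 := by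
    rw [hσ, div_lt_one (by nlinarith)]
    nlinarith
  have hterm : ∀ n : ℕ, (C n * A^n * (n.factorial / p^(n+1))) * (n.factorial / (2:ℝ)^(n+1))
      = (1/(1+A)) * (cB n * (σ/4)^n) := by
    intro n
    have hfn : (0:ℝ) < (n.factorial:ℝ) := by positivity
    have h1A : (0:ℝ) < 1 + A := by nlinarith
    rw [hC, hpA]
    simp only
    rw [div_pow (1+A) 2 (n+1)]
    have hs4 : σ/4 = A / ((1+A)*4) := by rw [hσ, div_div]
    rw [hs4, show (A/((1+A)*4))^n = A^n/((1+A)^n * 4^n) by rw [div_pow, mul_pow]]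
    field_simp
    ring
  rw [tsum_congr hterm, tsum_mul_left, tsum_cB hσ0 hσ1]
  have h1A : (0:ℝ) < 1 + A := by nlinarith
  have h1σ : 1 - σ = 1/(1+A) := by
    rw [hσ]
    field_simp
    ring
  rw [h1σ]
  rw [show (1:ℝ)/(1+A) = (1+A)⁻¹ by rw [one_div]]
  rw [Real.sqrt_inv]
  have hs0 : 0 < Real.sqrt (1+A) := Real.sqrt_pos.mpr h1A
  have hss : Real.sqrt (1+A) * Real.sqrt (1+A) = 1+A := Real.mul_self_sqrt h1A.le
  rw [hA]
  field_simp
  rw [Real.sq_sqrt (by positivity)]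
end
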